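/- arXiv:math/0506529 — 5 statements merged into one kernel-verified Lean document; each statement's English description precedes it below -/
import Mathlib

section
/- Let D be a connected finite graph. The map sending an elementary pair (G,F) of maximal nested sets on D to the triple (supp(G,F); α^{supp}_G, α^{supp}_F) induces a bijection between equivalence classes of elementary pairs (where (G,F) ~ (G',F') iff G\F = G'\F' and F\G = F'\G') and triples (B; α, β) consisting of a connected subdiagram B of D together with an ordered pair of distinct vertices α, β of B. -/
open scoped Classical
set_option linter.unusedSectionVars false
set_option maxHeartbeats 1000000

section NestedSets

variable {V : Type*} [Fintype V] [DecidableEq V]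

/-- The (induced subgraph on the) finite vertex set `B` is connected (in particular nonempty). -/
def Conn (G : SimpleGraph V) (B : Finset V) : Prop :=
  (G.induce (B : Set V)).Connected

/-- Two vertex sets are orthogonal: no edge of `G` joins a vertex of one to a vertex
of the other. -/
def Orth (G : SimpleGraph V) (B C : Finset V) : Prop :=
  ∀ a ∈ B, ∀ b ∈ C, ¬ G.Adj a b

/-- Two subdiagrams are compatible if one contains the other or they are orthogonal. -/
def Compat (G : SimpleGraph V) (B C : Finset V) : Prop :=
  B ⊆ C ∨ C ⊆ B ∨ Orth G B C

/-- A nested set on the (connected) diagram `D` with vertex set `V`: a collection of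
pairwise compatible connected subdiagrams containing `D` itself. -/
def Nested (G : SimpleGraph V) (H : Finset (Finset V)) : Prop :=
  Finset.univ ∈ H ∧ (∀ B ∈ H, Conn G B) ∧ ∀ B ∈ H, ∀ C ∈ H, Compat G B C

/-- `iN H B` is the union of the elements of `H` strictly contained in `B`;
this coincides with the union of the *maximal* elements of `H` strictly contained in `B`. -/
noncomputable def iN (H : Finset (Finset V)) (B : Finset V) : Finset V :=
  (H.filter fun C => C ⊂ B).sup id

/-- `nN H B = n(B;H)` is the number of vertices of `B` not covered by the maximal
elements of `H` strictly contained in `B`. -/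
noncomputable def nN (H : Finset (Finset V)) (B : Finset V) : ℕ :=
  (B \ iN H B).card

/-- `C` is a connected component of (the induced subgraph on) `S`. -/
def IsCC (G : SimpleGraph V) (S C : Finset V) : Prop :=
  C ⊆ S ∧ Conn G C ∧ ∀ C', C ⊆ C' → C' ⊆ S → Conn G C' → C' = C

/-- A maximal nested set on `D`. -/
def MaxNested (G : SimpleGraph V) (F : Finset (Finset V)) : Prop :=
  Nested G F ∧ ∀ K, Nested G K → F ⊆ K → K = F

end NestedSets

/-- The support of a pair of maximal nested sets: the union of the elements of the
symmetric difference. For an elementary pair this is the unique unsaturated element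
of `F ∩ Gs`. -/
noncomputable def suppP {V : Type*} [Fintype V] [DecidableEq V]
    (F Gs : Finset (Finset V)) : Finset V :=
  ((F \ Gs) ∪ (Gs \ F)).sup id

/-- An elementary pair of maximal nested sets: the two members differ by one element. -/
def ElemPair {V : Type*} [Fintype V] [DecidableEq V] (F Gs : Finset (Finset V)) : Prop :=
  (F \ Gs).card = 1 ∧ (Gs \ F).card = 1

section Infra
variable {V : Type*} [Fintype V] [DecidableEq V]
variable {G : SimpleGraph V}

/-- Reachability within a finite vertex set. -/
def Reach (G : SimpleGraph V) (B : Finset V) : V → V → Prop :=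
  Relation.ReflTransGen (fun x y => x ∈ B ∧ y ∈ B ∧ G.Adj x y)

lemma reach_mono {B C : Finset V} (h : B ⊆ C) {x y : V} (hxy : Reach G B x y) :
    Reach G C x y :=
  Relation.ReflTransGen.mono (r := fun x y => x ∈ B ∧ y ∈ B ∧ G.Adj x y)
    (fun _ _ hr => ⟨h hr.1, h hr.2.1, hr.2.2⟩) x y hxy

lemma reach_mem_right {B : Finset V} {x y : V} (hx : x ∈ B) (hxy : Reach G B x y) : y ∈ B := by
  induction hxy with
  | refl => exact hx
  | tail _ h ih => exact h.2.1


lemma reach_of_walk {B : Finset V} {u v : ↥(B : Set V)}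
    (w : (G.induce (B : Set V)).Walk u v) : Reach G B u.1 v.1 := by
  induction w with
  | nil => exact Relation.ReflTransGen.refl
  | @cons a b c h p ih =>
      exact Relation.ReflTransGen.head ⟨Finset.mem_coe.mp a.2, Finset.mem_coe.mp b.2, h⟩ ih

lemma reachable_of_reach {B : Finset V} {x y : V} (h : Reach G B x y)
    (hx : x ∈ B) : ∀ (hy : y ∈ (B : Set V)),
      (G.induce (B : Set V)).Reachable ⟨x, by simpa using hx⟩ ⟨y, hy⟩ := by
  induction h with
  | refl => exact fun _ => SimpleGraph.Reachable.refl _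
  | @tail b c hab hbc ih =>
      intro hy
      exact (ih (by simpa using hbc.1)).trans
        (SimpleGraph.Adj.reachable (by simpa using hbc.2.2))

lemma conn_iff {B : Finset V} :
    Conn G B ↔ B.Nonempty ∧ ∀ x ∈ B, ∀ y ∈ B, Reach G B x y := by
  rw [Conn, SimpleGraph.connected_iff]
  constructor
  · rintro ⟨hpre, hne⟩
    obtain ⟨⟨x0, hx0⟩⟩ := hne
    refine ⟨⟨x0, by simpa using hx0⟩, fun x hx y hy => ?_⟩
    obtain ⟨w⟩ := hpre ⟨x, by simpa using hx⟩ ⟨y, by simpa using hy⟩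
    exact reach_of_walk w
  · rintro ⟨⟨x0, hx0⟩, hr⟩
    refine ⟨fun ⟨x, hx⟩ ⟨y, hy⟩ => ?_, ⟨⟨x0, by simpa using hx0⟩⟩⟩
    exact reachable_of_reach (hr x (by simpa using hx) y (by simpa using hy)) (by simpa using hx) hy



end Infra

section More
variable {V : Type*} [Fintype V] [DecidableEq V] {G : SimpleGraph V}

lemma conn_nonempty {B : Finset V} (h : Conn G B) : B.Nonempty := (conn_iff.mp h).1

lemma conn_singleton (x : V) : Conn G {x} := by
  rw [conn_iff]
  refine ⟨⟨x, Finset.mem_singleton_self x⟩, fun a ha b hb => ?_⟩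
  rw [Finset.mem_singleton] at ha hb
  subst ha; subst hb; exact Relation.ReflTransGen.refl

lemma conn_union_overlap {A B : Finset V} (hA : Conn G A) (hB : Conn G B)
    (h : (A ∩ B).Nonempty) : Conn G (A ∪ B) := by
  rw [conn_iff] at *
  obtain ⟨p, hp⟩ := h
  rw [Finset.mem_inter] at hp
  refine ⟨⟨p, Finset.mem_union_left _ hp.1⟩, fun x hx y hy => ?_⟩
  have key : ∀ z ∈ A ∪ B, Reach G (A ∪ B) z p := by
    intro z hz
    rcases Finset.mem_union.mp hz with h' | h'
    · exact reach_mono Finset.subset_union_left (hA.2 z h' p hp.1)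
    · exact reach_mono Finset.subset_union_right (hB.2 z h' p hp.2)
  have key2 : ∀ z ∈ A ∪ B, Reach G (A ∪ B) p z := by
    intro z hz
    rcases Finset.mem_union.mp hz with h' | h'
    · exact reach_mono Finset.subset_union_left (hA.2 p hp.1 z h')
    · exact reach_mono Finset.subset_union_right (hB.2 p hp.2 z h')
  exact (key x hx).trans (key2 y hy)

lemma conn_union_adj {A B : Finset V} {a b : V} (hA : Conn G A) (hB : Conn G B)
    (ha : a ∈ A) (hb : b ∈ B) (hab : G.Adj a b) : Conn G (A ∪ B) := by
  rw [conn_iff] at *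
  refine ⟨⟨a, Finset.mem_union_left _ ha⟩, fun x hx y hy => ?_⟩
  have step : Reach G (A ∪ B) a b :=
    Relation.ReflTransGen.single ⟨Finset.mem_union_left _ ha, Finset.mem_union_right _ hb, hab⟩
  have toA : ∀ z ∈ A ∪ B, Reach G (A ∪ B) z b := by
    intro z hz
    rcases Finset.mem_union.mp hz with h' | h'
    · exact (reach_mono Finset.subset_union_left (hA.2 z h' a ha)).trans step
    · exact reach_mono Finset.subset_union_right (hB.2 z h' b hb)
  have fromB : ∀ z ∈ A ∪ B, Reach G (A ∪ B) b z := by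
    intro z hz
    rcases Finset.mem_union.mp hz with h' | h'
    · exact (Relation.ReflTransGen.single
        ⟨Finset.mem_union_right _ hb, Finset.mem_union_left _ ha, hab.symm⟩).trans
        (reach_mono Finset.subset_union_left (hA.2 a ha z h'))
    · exact reach_mono Finset.subset_union_right (hB.2 b hb z h')
  exact (toA x hx).trans (fromB y hy)

lemma exists_boundary_edge {S A : Finset V} (hS : Conn G S) (hAS : A ⊆ S)
    {a b : V} (ha : a ∈ A) (hb : b ∈ S) (hbA : b ∉ A) :
    ∃ x ∈ A, ∃ y ∈ S, y ∉ A ∧ G.Adj x y := by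
  have hr : Reach G S a b := (conn_iff.mp hS).2 a (hAS ha) b hb
  clear hb
  induction hr with
  | refl => exact absurd ha hbA
  | @tail c d hac hcd ih =>
      by_cases hc : c ∈ A
      · exact ⟨c, hc, d, hcd.2.1, hbA, hcd.2.2⟩
      · exact ih hc

lemma orth_symm {A B : Finset V} (h : Orth G A B) : Orth G B A :=
  fun a ha b hb hadj => h b hb a ha hadj.symm

lemma orth_mono {A B A' B' : Finset V} (hA : A' ⊆ A) (hB : B' ⊆ B) (h : Orth G A B) :
    Orth G A' B' := fun a ha b hb => h a (hA ha) b (hB hb)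

lemma exists_isCC {S : Finset V} {x : V} (hx : x ∈ S) : ∃ C, IsCC G S C ∧ x ∈ C := by
  classical
  set T := S.powerset.filter (fun C => x ∈ C ∧ Conn G C) with hT
  have hTne : T.Nonempty := by
    refine ⟨{x}, ?_⟩
    simp [hT, Finset.singleton_subset_iff, hx, conn_singleton]
  obtain ⟨C, hC, hmax⟩ := T.exists_max_image Finset.card hTne
  simp only [hT, Finset.mem_filter, Finset.mem_powerset] at hC
  refine ⟨C, ⟨hC.1, hC.2.2, fun C' hCC' hC'S hC' => ?_⟩, hC.2.1⟩
  have hC'T : C' ∈ T := by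
    simp only [hT, Finset.mem_filter, Finset.mem_powerset]
    exact ⟨hC'S, hCC' hC.2.1, hC'⟩
  exact (Finset.eq_of_subset_of_card_le hCC' (hmax C' hC'T)).symm

noncomputable def ccOf (G : SimpleGraph V) (S : Finset V) (x : V) : Finset V :=
  if h : x ∈ S then (exists_isCC (G := G) h).choose else {x}

lemma isCC_ccOf {S : Finset V} {x : V} (hx : x ∈ S) : IsCC G S (ccOf G S x) := by
  rw [ccOf, dif_pos hx]; exact (exists_isCC hx).choose_spec.1

lemma mem_ccOf {S : Finset V} {x : V} (hx : x ∈ S) : x ∈ ccOf G S x := by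
  rw [ccOf, dif_pos hx]; exact (exists_isCC hx).choose_spec.2

lemma IsCC.closed {S C : Finset V} (h : IsCC G S C) {a b : V} (ha : a ∈ C) (hb : b ∈ S)
    (hab : G.Adj a b) : b ∈ C := by
  have : C ∪ {b} = C := h.2.2 _ Finset.subset_union_left
    (Finset.union_subset h.1 (Finset.singleton_subset_iff.mpr hb))
    (conn_union_adj h.2.1 (conn_singleton b) ha (Finset.mem_singleton_self b) hab)
  rw [← this]; exact Finset.mem_union_right _ (Finset.mem_singleton_self b)

lemma subset_cc_of_conn {S C D : Finset V} (hD : Conn G D) (hDS : D ⊆ S)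
    (hC : IsCC G S C) (h : (D ∩ C).Nonempty) : D ⊆ C := by
  have : D ∪ C = C := hC.2.2 _ Finset.subset_union_right
    (Finset.union_subset hDS hC.1)
    (conn_union_overlap hD hC.2.1 h)
  rw [← this]; exact Finset.subset_union_left

lemma isCC_unique {S C C' : Finset V} (hC : IsCC G S C) (hC' : IsCC G S C')
    {x : V} (hx : x ∈ C) (hx' : x ∈ C') : C = C' :=
  Finset.Subset.antisymm
    (subset_cc_of_conn hC.2.1 hC.1 hC' ⟨x, Finset.mem_inter.mpr ⟨hx, hx'⟩⟩)
    (subset_cc_of_conn hC'.2.1 hC'.1 hC ⟨x, Finset.mem_inter.mpr ⟨hx', hx⟩⟩)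

lemma ccOf_eq {S C : Finset V} (hC : IsCC G S C) {x : V} (hx : x ∈ C) :
    C = ccOf G S x :=
  isCC_unique hC (isCC_ccOf (hC.1 hx)) hx (mem_ccOf (hC.1 hx))

lemma isCC_orth {S C C' : Finset V} (hC : IsCC G S C) (hC' : IsCC G S C')
    (h : C ≠ C') : Orth G C C' := by
  intro a ha b hb hab
  exact h (isCC_unique hC hC' ha (hC'.closed hb (hC.1 ha) hab.symm))

lemma isCC_restrict {S S' C : Finset V} (hC : IsCC G S C) (hCS' : C ⊆ S') (hS' : S' ⊆ S) :
    IsCC G S' C :=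
  ⟨hCS', hC.2.1, fun C' h1 h2 h3 => hC.2.2 C' h1 (h2.trans hS') h3⟩

lemma IsCC.nonempty {S C : Finset V} (h : IsCC G S C) : C.Nonempty := conn_nonempty h.2.1

noncomputable def comps (G : SimpleGraph V) (S : Finset V) : Finset (Finset V) :=
  S.powerset.filter (fun C => IsCC G S C)

lemma mem_comps {S C : Finset V} : C ∈ comps G S ↔ IsCC G S C := by
  simp only [comps, Finset.mem_filter, Finset.mem_powerset]
  exact ⟨fun h => h.2, fun h => ⟨h.1, h⟩⟩

lemma sup_comps (S : Finset V) : (comps G S).sup id = S := by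
  apply Finset.Subset.antisymm
  · intro x hx
    obtain ⟨C, hC, hxC⟩ := Finset.mem_sup.mp hx
    exact (mem_comps.mp hC).1 hxC
  · intro x hx
    exact Finset.mem_sup.mpr ⟨ccOf G S x, mem_comps.mpr (isCC_ccOf hx), mem_ccOf hx⟩

lemma comp_pivot_adj {S C : Finset V} {v : V} (hS : Conn G S) (hv : v ∈ S)
    (hC : IsCC G (S.erase v) C) : ∃ w ∈ C, G.Adj v w := by
  obtain ⟨c, hc⟩ := hC.nonempty
  have hvC : v ∉ C := fun h => (Finset.mem_erase.mp (hC.1 h)).1 rfl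
  obtain ⟨x, hxC, y, hyS, hyC, hxy⟩ := exists_boundary_edge hS
    (hC.1.trans (Finset.erase_subset v S)) hc hv hvC
  by_cases hyv : y = v
  · exact ⟨x, hxC, by rw [← hyv]; exact hxy.symm⟩
  · exact absurd (hC.closed hxC (Finset.mem_erase.mpr ⟨hyv, hyS⟩) hxy) hyC

lemma comps_split {W : Finset V} {a : V} (ha : a ∈ W) :
    comps G (W.erase a) =
      ((comps G W).erase (ccOf G W a)) ∪ comps G ((ccOf G W a).erase a) := by
  set Ca := ccOf G W a with hCadef
  have hCa : IsCC G W Ca := isCC_ccOf ha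
  have haCa : a ∈ Ca := mem_ccOf ha
  ext K
  simp only [Finset.mem_union, Finset.mem_erase, mem_comps]
  constructor
  · intro hK
    obtain ⟨k, hk⟩ := hK.nonempty
    have hkW : k ∈ W := Finset.erase_subset a W (hK.1 hk)
    have hKM : K ⊆ ccOf G W k :=
      subset_cc_of_conn hK.2.1 (hK.1.trans (Finset.erase_subset a W)) (isCC_ccOf hkW)
        ⟨k, Finset.mem_inter.mpr ⟨hk, mem_ccOf hkW⟩⟩
    by_cases hM : ccOf G W k = Ca
    · right
      have haK : a ∉ K := fun h => (Finset.mem_erase.mp (hK.1 h)).1 rfl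
      have hKCa : K ⊆ Ca.erase a := fun x hx => Finset.mem_erase.mpr
        ⟨fun he => haK (he ▸ hx), hM ▸ hKM hx⟩
      have hkCa : k ∈ Ca.erase a := hKCa hk
      have hE : IsCC G (Ca.erase a) (ccOf G (Ca.erase a) k) := isCC_ccOf hkCa
      have hKE : K ⊆ ccOf G (Ca.erase a) k :=
        subset_cc_of_conn hK.2.1 hKCa hE ⟨k, Finset.mem_inter.mpr ⟨hk, mem_ccOf hkCa⟩⟩
      have hEW : ccOf G (Ca.erase a) k ⊆ W.erase a := fun x hx => by
        have := hE.1 hx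
        rw [Finset.mem_erase] at this ⊢
        exact ⟨this.1, hCa.1 this.2⟩
      have : ccOf G (Ca.erase a) k = K := hK.2.2 _ hKE hEW hE.2.1
      rw [← this]; exact hE
    · left
      have hMW : ccOf G W k ⊆ W.erase a := by
        intro x hx
        rw [Finset.mem_erase]
        refine ⟨fun he => hM ?_, (isCC_ccOf hkW).1 hx⟩
        exact isCC_unique (isCC_ccOf hkW) hCa (he ▸ hx) haCa
      have : ccOf G W k = K := hK.2.2 _ hKM hMW (isCC_ccOf hkW).2.1
      exact ⟨fun h => hM (this.trans h), this ▸ isCC_ccOf hkW⟩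
  · rintro (⟨hKCa, hK⟩ | hK)
    · have haK : a ∉ K := fun h => hKCa (isCC_unique hK hCa h haCa)
      have hKW : K ⊆ W.erase a := fun x hx =>
        Finset.mem_erase.mpr ⟨fun he => haK (he ▸ hx), hK.1 hx⟩
      exact isCC_restrict hK hKW (Finset.erase_subset a W)
    · refine ⟨fun x hx => Finset.mem_erase.mpr
        ⟨(Finset.mem_erase.mp (hK.1 hx)).1, hCa.1 (Finset.mem_erase.mp (hK.1 hx)).2⟩,
        hK.2.1, fun C' h1 h2 h3 => ?_⟩
      obtain ⟨k, hk⟩ := hK.nonempty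
      have hC'Ca : C' ⊆ Ca := subset_cc_of_conn h3 (fun x hx => Finset.erase_subset a W (h2 hx))
        hCa ⟨k, Finset.mem_inter.mpr ⟨h1 hk, (Finset.mem_erase.mp (hK.1 hk)).2⟩⟩
      have hC'Cea : C' ⊆ Ca.erase a := fun x hx =>
        Finset.mem_erase.mpr ⟨(Finset.mem_erase.mp (h2 hx)).1, hC'Ca hx⟩
      exact hK.2.2 C' h1 hC'Cea h3


noncomputable def buildN (G : SimpleGraph V) (pv : Finset V → V) : Finset V → Finset (Finset V) :=
  fun S => insert S ((comps G (S.erase (pv S))).biUnion fun C =>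
    if h : C ⊂ S then buildN G pv C else ∅)
termination_by S => S.card
decreasing_by exact Finset.card_lt_card h

def ValidPv (G : SimpleGraph V) (pv : Finset V → V) : Prop :=
  ∀ S : Finset V, S.Nonempty → pv S ∈ S

lemma comp_ssub {S C : Finset V} {v : V} (hv : v ∈ S) (hC : IsCC G (S.erase v) C) :
    C ⊂ S :=
  Finset.ssubset_of_subset_of_ssubset hC.1 (Finset.erase_ssubset hv)

lemma buildN_eq {pv : Finset V → V} {S : Finset V} (hv : pv S ∈ S) :
    buildN G pv S = insert S ((comps G (S.erase (pv S))).biUnion (buildN G pv)) := by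
  rw [buildN]
  congr 1
  refine Finset.biUnion_congr rfl (fun C hC => ?_)
  rw [dif_pos (comp_ssub hv (mem_comps.mp hC))]

lemma self_mem_buildN {pv : Finset V → V} {S : Finset V} : S ∈ buildN G pv S := by
  rw [buildN]; exact Finset.mem_insert_self _ _

lemma mem_buildN {pv : Finset V → V} {S T : Finset V} (hv : pv S ∈ S) :
    T ∈ buildN G pv S ↔
      T = S ∨ ∃ C, IsCC G (S.erase (pv S)) C ∧ T ∈ buildN G pv C := by
  rw [buildN_eq hv]
  simp only [Finset.mem_insert, Finset.mem_biUnion, mem_comps]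

lemma buildN_subset_conn {pv : Finset V → V} (hpv : ValidPv G pv) :
    ∀ S : Finset V, Conn G S → ∀ T ∈ buildN G pv S, T ⊆ S ∧ Conn G T := by
  intro S
  induction S using Finset.strongInduction with
  | _ S ih =>
    intro hS T hT
    have hv : pv S ∈ S := hpv S (conn_nonempty hS)
    rcases (mem_buildN hv).mp hT with rfl | ⟨C, hC, hTC⟩
    · exact ⟨Finset.Subset.refl _, hS⟩
    · have hCS : C ⊂ S := comp_ssub hv hC
      obtain ⟨h1, h2⟩ := ih C hCS hC.2.1 T hTC
      exact ⟨h1.trans hCS.1, h2⟩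

lemma buildN_compat {pv : Finset V → V} (hpv : ValidPv G pv) :
    ∀ S : Finset V, Conn G S →
      ∀ T1 ∈ buildN G pv S, ∀ T2 ∈ buildN G pv S, Compat G T1 T2 := by
  intro S
  induction S using Finset.strongInduction with
  | _ S ih =>
    intro hS T1 hT1 T2 hT2
    have hv : pv S ∈ S := hpv S (conn_nonempty hS)
    rcases (mem_buildN hv).mp hT1 with rfl | ⟨C1, hC1, hTC1⟩
    · exact Or.inr (Or.inl (buildN_subset_conn hpv _ hS T2 hT2).1)
    rcases (mem_buildN hv).mp hT2 with rfl | ⟨C2, hC2, hTC2⟩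
    · exact Or.inl ((buildN_subset_conn hpv C1 hC1.2.1 T1 hTC1).1.trans
        (comp_ssub hv hC1).1)
    by_cases h12 : C1 = C2
    · exact ih C1 (comp_ssub hv hC1) hC1.2.1 T1 hTC1 T2 (h12 ▸ hTC2)
    · refine Or.inr (Or.inr (orth_mono ?_ ?_ (isCC_orth hC1 hC2 h12)))
      · exact (buildN_subset_conn hpv C1 hC1.2.1 T1 hTC1).1
      · exact (buildN_subset_conn hpv C2 hC2.2.1 T2 hTC2).1

lemma buildN_closed {pv : Finset V → V} (hpv : ValidPv G pv) :
    ∀ S : Finset V, Conn G S → ∀ D : Finset V, Conn G D → D ⊆ S →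
      (∀ T ∈ buildN G pv S, Compat G D T) → D ∈ buildN G pv S := by
  intro S
  induction S using Finset.strongInduction with
  | _ S ih =>
    intro hS D hD hDS hcomp
    have hv : pv S ∈ S := hpv S (conn_nonempty hS)
    set v := pv S with hvdef
    by_cases hvD : v ∈ D
    · -- D = S
      have hall : ∀ C, IsCC G (S.erase v) C → C ⊆ D := by
        intro C hC
        have hCb : C ∈ buildN G pv S :=
          (mem_buildN hv).mpr (Or.inr ⟨C, hC, self_mem_buildN⟩)
        rcases hcomp C hCb with h | h | h
        · exact absurd (Finset.mem_erase.mp (hC.1 (h hvD))).1 (by simp)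
        · exact h
        · obtain ⟨w, hwC, hvw⟩ := comp_pivot_adj hS hv hC
          exact absurd hvw (h v hvD w hwC)
      have : S ⊆ D := by
        intro x hx
        by_cases hxv : x = v
        · exact hxv ▸ hvD
        · exact hall _ (isCC_ccOf (Finset.mem_erase.mpr ⟨hxv, hx⟩))
            (mem_ccOf (Finset.mem_erase.mpr ⟨hxv, hx⟩))
      have : D = S := Finset.Subset.antisymm hDS this
      rw [this]; exact self_mem_buildN
    · obtain ⟨d, hd⟩ := conn_nonempty hD
      have hdS : d ∈ S.erase v := Finset.mem_erase.mpr ⟨fun h => hvD (h ▸ hd), hDS hd⟩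
      have hDse : D ⊆ S.erase v := fun x hx =>
        Finset.mem_erase.mpr ⟨fun h => hvD (h ▸ hx), hDS hx⟩
      have hC : IsCC G (S.erase v) (ccOf G (S.erase v) d) := isCC_ccOf hdS
      have hDC : D ⊆ ccOf G (S.erase v) d :=
        subset_cc_of_conn hD hDse hC ⟨d, Finset.mem_inter.mpr ⟨hd, mem_ccOf hdS⟩⟩
      have hmem : D ∈ buildN G pv (ccOf G (S.erase v) d) := by
        refine ih _ (comp_ssub hv hC) hC.2.1 D hD hDC (fun T hT => ?_)
        exact hcomp T ((mem_buildN hv).mpr (Or.inr ⟨_, hC, hT⟩))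
      exact (mem_buildN hv).mpr (Or.inr ⟨_, hC, hmem⟩)

lemma conn_univ_of_connected (hG : G.Connected) : Conn G (Finset.univ : Finset V) := by
  have : Nonempty V := hG.nonempty
  rw [conn_iff]
  refine ⟨Finset.univ_nonempty, fun x _ y _ => ?_⟩
  obtain ⟨w⟩ := hG.preconnected x y
  induction w with
  | nil => exact Relation.ReflTransGen.refl
  | cons h p ih =>
      exact Relation.ReflTransGen.head ⟨Finset.mem_univ _, Finset.mem_univ _, h⟩ (ih (Finset.mem_univ _) (Finset.mem_univ _))

lemma buildN_maxNested {pv : Finset V → V} (hpv : ValidPv G pv) (hG : G.Connected) :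
    MaxNested G (buildN G pv Finset.univ) := by
  have hconn : Conn G (Finset.univ : Finset V) := conn_univ_of_connected hG
  refine ⟨⟨self_mem_buildN, fun B hB => (buildN_subset_conn hpv _ hconn B hB).2,
    buildN_compat hpv _ hconn⟩, fun K hK hsub => ?_⟩
  apply Finset.Subset.antisymm _ hsub
  intro T hT
  exact buildN_closed hpv _ hconn T (hK.2.1 T hT) (Finset.subset_univ T)
    (fun T' hT' => hK.2.2 T hT T' (hsub hT'))

lemma buildN_congr {pv1 pv2 : Finset V → V} :
    ∀ S : Finset V, (∀ T ⊆ S, pv1 T = pv2 T) → buildN G pv1 S = buildN G pv2 S := by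
  intro S
  induction S using Finset.strongInduction with
  | _ S ih =>
    intro h
    rw [buildN, buildN]
    have hps : pv1 S = pv2 S := h S (Finset.Subset.refl S)
    rw [← hps]
    congr 1
    refine Finset.biUnion_congr rfl (fun C hC => ?_)
    by_cases hCS : C ⊂ S
    · rw [dif_pos hCS, dif_pos hCS]
      exact ih C hCS (fun T hT => h T (hT.trans hCS.1))
    · rw [dif_neg hCS, dif_neg hCS]

lemma buildN_sub_of_chain {pv : Finset V → V} {B : Finset V} (hB : Conn G B)
    (hpv : ValidPv G pv) (hout : ∀ T, B ⊆ T → T ≠ B → pv T ∉ B) :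
    ∀ S : Finset V, B ⊆ S → buildN G pv B ⊆ buildN G pv S := by
  intro S
  induction S using Finset.strongInduction with
  | _ S ih =>
    intro hBS
    by_cases hSB : S = B
    · rw [hSB]
    · obtain ⟨b, hb⟩ := conn_nonempty hB
      have hv : pv S ∈ S := hpv S ⟨b, hBS hb⟩
      have hvB : pv S ∉ B := hout S hBS hSB
      have hbse : b ∈ S.erase (pv S) :=
        Finset.mem_erase.mpr ⟨fun h => hvB (h ▸ hb), hBS hb⟩
      have hBse : B ⊆ S.erase (pv S) := fun x hx =>
        Finset.mem_erase.mpr ⟨fun h => hvB (h ▸ hx), hBS hx⟩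
      have hC0 : IsCC G (S.erase (pv S)) (ccOf G (S.erase (pv S)) b) := isCC_ccOf hbse
      have hBC0 : B ⊆ ccOf G (S.erase (pv S)) b :=
        subset_cc_of_conn hB hBse hC0 ⟨b, Finset.mem_inter.mpr ⟨hb, mem_ccOf hbse⟩⟩
      intro T hT
      exact (mem_buildN hv).mpr
        (Or.inr ⟨_, hC0, ih _ (comp_ssub hv hC0) hBC0 hT⟩)

lemma buildN_classify {pv : Finset V → V} {B : Finset V} (hB : Conn G B)
    (hout : ∀ T, B ⊆ T → T ≠ B → pv T ∉ B) (hpv : ValidPv G pv) :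
    ∀ S : Finset V, B ⊆ S →
      ∀ T ∈ buildN G pv S, B ⊆ T ∨ T ∩ B = ∅ ∨ T ∈ buildN G pv B := by
  intro S
  induction S using Finset.strongInduction with
  | _ S ih =>
    intro hBS T hT
    by_cases hSB : S = B
    · exact Or.inr (Or.inr (hSB ▸ hT))
    · have hv : pv S ∈ S := hpv S ⟨_, hBS (conn_nonempty hB).choose_spec⟩
      have hvB : pv S ∉ B := hout S hBS hSB
      rcases (mem_buildN hv).mp hT with rfl | ⟨C, hC, hTC⟩
      · exact Or.inl hBS
      · obtain ⟨b, hb⟩ := conn_nonempty hB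
        have hbse : b ∈ S.erase (pv S) :=
          Finset.mem_erase.mpr ⟨fun h => hvB (h ▸ hb), hBS hb⟩
        have hBse : B ⊆ S.erase (pv S) := fun x hx =>
          Finset.mem_erase.mpr ⟨fun h => hvB (h ▸ hx), hBS hx⟩
        have hC0 : IsCC G (S.erase (pv S)) (ccOf G (S.erase (pv S)) b) := isCC_ccOf hbse
        have hBC0 : B ⊆ ccOf G (S.erase (pv S)) b :=
          subset_cc_of_conn hB hBse hC0 ⟨b, Finset.mem_inter.mpr ⟨hb, mem_ccOf hbse⟩⟩
        by_cases hCC0 : C = ccOf G (S.erase (pv S)) b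
        · exact ih C (comp_ssub hv hC) (hCC0 ▸ hBC0) T hTC
        · refine Or.inr (Or.inl ?_)
          rw [Finset.eq_empty_iff_forall_notMem]
          intro x hx
          rw [Finset.mem_inter] at hx
          have hxC : x ∈ C := (buildN_subset_conn hpv C hC.2.1 T hTC).1 hx.1
          exact hCC0 (isCC_unique hC hC0 hxC (hBC0 hx.2))

lemma compat_symm {A B : Finset V} (h : Compat G A B) : Compat G B A := by
  rcases h with h | h | h
  exacts [Or.inr (Or.inl h), Or.inl h, Or.inr (Or.inr (orth_symm h))]

lemma mem_iN {H : Finset (Finset V)} {B : Finset V} {x : V} :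
    x ∈ iN H B ↔ ∃ T ∈ H, T ⊂ B ∧ x ∈ T := by
  simp only [iN, Finset.mem_sup, Finset.mem_filter, id]
  constructor
  · rintro ⟨T, ⟨h1, h2⟩, h3⟩; exact ⟨T, h1, h2, h3⟩
  · rintro ⟨T, h1, h2, h3⟩; exact ⟨T, ⟨h1, h2⟩, h3⟩

lemma uncovered {F : Finset (Finset V)} {B : Finset V} {a : V}
    (ha : B \ iN F B = {a}) : a ∈ B ∧ ∀ T ∈ F, T ⊂ B → a ∉ T := by
  have h : a ∈ B \ iN F B := ha ▸ Finset.mem_singleton_self a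
  rw [Finset.mem_sdiff] at h
  exact ⟨h.1, fun T hT hTB haT => h.2 (mem_iN.mpr ⟨T, hT, hTB, haT⟩)⟩

lemma mem_of_compat {F : Finset (Finset V)} {C : Finset V} (hF : MaxNested G F)
    (hC : Conn G C) (hall : ∀ T ∈ F, Compat G C T) : C ∈ F := by
  have hne : Nested G (insert C F) := by
    refine ⟨Finset.mem_insert_of_mem hF.1.1, fun B hB => ?_, fun B1 h1 B2 h2 => ?_⟩
    · rcases Finset.mem_insert.mp hB with rfl | h
      exacts [hC, hF.1.2.1 B h]
    · rcases Finset.mem_insert.mp h1 with ha1 | ha1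
      · rcases Finset.mem_insert.mp h2 with ha2 | ha2
        · rw [ha1, ha2]; exact Or.inl (Finset.Subset.refl _)
        · rw [ha1]; exact hall B2 ha2
      · rcases Finset.mem_insert.mp h2 with ha2 | ha2
        · rw [ha2]; exact compat_symm (hall B1 ha1)
        · exact hF.1.2.2 B1 ha1 B2 ha2
  have := hF.2 _ hne (Finset.subset_insert _ _)
  rw [← this]; exact Finset.mem_insert_self _ _

lemma alpha_exists {F : Finset (Finset V)} {B : Finset V} (hF : MaxNested G F)
    (hB : B ∈ F) : ∃ a, B \ iN F B = {a} := by
  have hBc : Conn G B := hF.1.2.1 B hB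
  rw [← Finset.card_eq_one]
  have hne : (B \ iN F B).Nonempty := by
    rw [Finset.sdiff_nonempty]
    intro hsub
    obtain ⟨b0, hb0⟩ := conn_nonempty hBc
    obtain ⟨T0, hT0F, hT0B, hb0T0⟩ := mem_iN.mp (hsub hb0)
    obtain ⟨M, hM, hmax⟩ := (F.filter (fun T => T ⊂ B)).exists_max_image Finset.card
      ⟨T0, Finset.mem_filter.mpr ⟨hT0F, hT0B⟩⟩
    rw [Finset.mem_filter] at hM
    have hMc : Conn G M := hF.1.2.1 M hM.1
    obtain ⟨m, hm⟩ := conn_nonempty hMc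
    obtain ⟨y, hyB, hyM⟩ := Finset.exists_of_ssubset hM.2
    obtain ⟨x, hxM, z, hzB, hzM, hxz⟩ := exists_boundary_edge hBc hM.2.1 hm hyB hyM
    obtain ⟨T, hTF, hTB, hzT⟩ := mem_iN.mp (hsub hzB)
    rcases hF.1.2.2 M hM.1 T hTF with h | h | h
    · have hne' : M ≠ T := fun he => hzM (he ▸ hzT)
      have hlt : M.card < T.card :=
        Finset.card_lt_card (Finset.ssubset_iff_subset_ne.mpr ⟨h, hne'⟩)
      exact absurd (hmax T (Finset.mem_filter.mpr ⟨hTF, hTB⟩)) (not_le.mpr hlt)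
    · exact hzM (h hzT)
    · exact h x hxM z hzT hxz
  rcases Nat.lt_or_ge (B \ iN F B).card 2 with h2 | h2
  · have := Finset.card_pos.mpr hne
    omega
  · exfalso
    obtain ⟨a, ha, b, hb, hab⟩ := Finset.one_lt_card.mp h2
    rw [Finset.mem_sdiff] at ha hb
    have hunc : ∀ T ∈ F, T ⊂ B → a ∉ T ∧ b ∉ T := by
      intro T hT hTB
      exact ⟨fun h => ha.2 (mem_iN.mpr ⟨T, hT, hTB, h⟩),
        fun h => hb.2 (mem_iN.mpr ⟨T, hT, hTB, h⟩)⟩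
    have haBe : a ∈ B.erase b := Finset.mem_erase.mpr ⟨hab, ha.1⟩
    set C := ccOf G (B.erase b) a with hCdef
    have hC : IsCC G (B.erase b) C := isCC_ccOf haBe
    have hCB : C ⊆ B := hC.1.trans (Finset.erase_subset b B)
    have hCmem : C ∈ F := by
      refine mem_of_compat hF hC.2.1 (fun T hTF => ?_)
      rcases hF.1.2.2 B hB T hTF with h | h | h
      · exact Or.inl (hCB.trans h)
      · by_cases hTB : T = B
        · exact Or.inl (hTB ▸ hCB)
        · have hTB' : T ⊂ B := Finset.ssubset_iff_subset_ne.mpr ⟨h, hTB⟩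
          have hu := hunc T hTF hTB'
          have hTBe : T ⊆ B.erase b := fun x hx =>
            Finset.mem_erase.mpr ⟨fun he => hu.2 (he ▸ hx), h hx⟩
          by_cases hint : (T ∩ C).Nonempty
          · exact Or.inr (Or.inl
              (subset_cc_of_conn (hF.1.2.1 T hTF) hTBe hC hint))
          · refine Or.inr (Or.inr (fun c hc t ht hadj => ?_))
            have huni : Conn G (T ∪ C) :=
              conn_union_adj (hF.1.2.1 T hTF) hC.2.1 ht hc hadj.symm
            have : T ∪ C = C := hC.2.2 _ Finset.subset_union_right
              (Finset.union_subset hTBe hC.1) huni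
            obtain ⟨t0, ht0⟩ := conn_nonempty (hF.1.2.1 T hTF)
            exact hint ⟨t0, Finset.mem_inter.mpr
              ⟨ht0, by rw [← this]; exact Finset.mem_union_left _ ht0⟩⟩
      · exact Or.inr (Or.inr (orth_mono hCB (Finset.Subset.refl T) h))
    have hCssB : C ⊂ B := Finset.ssubset_iff_subset_ne.mpr
      ⟨hCB, fun he => (Finset.mem_erase.mp (hC.1 (he ▸ (hb.1 : b ∈ B) : b ∈ C))).1 rfl⟩
    exact (hunc C hCmem hCssB).1 (mem_ccOf haBe)

lemma comps_mem_of_max {F : Finset (Finset V)} {B : Finset V} {a : V}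
    (hF : MaxNested G F) (hB : B ∈ F) (ha : B \ iN F B = {a})
    {C : Finset V} (hC : IsCC G (B.erase a) C) : C ∈ F := by
  have hCB : C ⊆ B := hC.1.trans (Finset.erase_subset a B)
  have hu := (uncovered ha).2
  refine mem_of_compat hF hC.2.1 (fun T hTF => ?_)
  rcases hF.1.2.2 B hB T hTF with h | h | h
  · exact Or.inl (hCB.trans h)
  · by_cases hTB : T = B
    · exact Or.inl (hTB ▸ hCB)
    · have hTB' : T ⊂ B := Finset.ssubset_iff_subset_ne.mpr ⟨h, hTB⟩
      have hTBe : T ⊆ B.erase a := fun x hx =>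
        Finset.mem_erase.mpr ⟨fun he => hu T hTF hTB' (he ▸ hx), h hx⟩
      by_cases hint : (T ∩ C).Nonempty
      · exact Or.inr (Or.inl (subset_cc_of_conn (hF.1.2.1 T hTF) hTBe hC hint))
      · refine Or.inr (Or.inr (fun c hc t ht hadj => ?_))
        have huni : Conn G (T ∪ C) :=
          conn_union_adj (hF.1.2.1 T hTF) hC.2.1 ht hc hadj.symm
        have : T ∪ C = C := hC.2.2 _ Finset.subset_union_right
          (Finset.union_subset hTBe hC.1) huni
        obtain ⟨t0, ht0⟩ := conn_nonempty (hF.1.2.1 T hTF)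
        exact hint ⟨t0, Finset.mem_inter.mpr
          ⟨ht0, by rw [← this]; exact Finset.mem_union_left _ ht0⟩⟩
  · exact Or.inr (Or.inr (orth_mono hCB (Finset.Subset.refl T) h))

lemma iN_eq_erase {F : Finset (Finset V)} {B : Finset V} {a : V}
    (hF : MaxNested G F) (hB : B ∈ F) (ha : B \ iN F B = {a}) :
    iN F B = B.erase a := by
  apply Finset.Subset.antisymm
  · intro x hx
    obtain ⟨T, hTF, hTB, hxT⟩ := mem_iN.mp hx
    exact Finset.mem_erase.mpr ⟨fun he => (uncovered ha).2 T hTF hTB (he ▸ hxT), hTB.1 hxT⟩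
  · intro x hx
    have hC : IsCC G (B.erase a) (ccOf G (B.erase a) x) := isCC_ccOf hx
    refine mem_iN.mpr ⟨_, comps_mem_of_max hF hB ha hC, ?_, mem_ccOf hx⟩
    exact Finset.ssubset_of_subset_of_ssubset hC.1 (Finset.erase_ssubset (uncovered ha).1)


section Pair
variable {F Gs : Finset (Finset V)} {P Q : Finset V}

lemma cc_vertex_unique {B Q : Finset V} (hB : Conn G B) {a a' : V} (ha : a ∈ B)
    (h1 : IsCC G (B.erase a) Q) (h2 : IsCC G (B.erase a') Q) : a = a' := by
  obtain ⟨q, hq⟩ := h1.nonempty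
  have haQ : a ∉ Q := fun h => (Finset.mem_erase.mp (h1.1 h)).1 rfl
  obtain ⟨x, hxQ, y, hyB, hyQ, hxy⟩ := exists_boundary_edge hB
    (h1.1.trans (Finset.erase_subset a B)) hq ha haQ
  have hya : y = a := by
    by_contra hne
    exact hyQ (h1.closed hxQ (Finset.mem_erase.mpr ⟨hne, hyB⟩) hxy)
  have hya' : y = a' := by
    by_contra hne
    exact hyQ (h2.closed hxQ (Finset.mem_erase.mpr ⟨hne, hyB⟩) hxy)
  rw [← hya, hya']

lemma pair_P_mem (hP : F \ Gs = {P}) : P ∈ F ∧ P ∉ Gs := by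
  have : P ∈ F \ Gs := hP ▸ Finset.mem_singleton_self P
  exact Finset.mem_sdiff.mp this

lemma pair_inter_F (hQ : Gs \ F = {Q}) {T : Finset V} (hT : T ∈ Gs) (hTQ : T ≠ Q) :
    T ∈ F := by
  by_contra h
  exact hTQ (Finset.mem_singleton.mp (hQ ▸ Finset.mem_sdiff.mpr ⟨hT, h⟩))

lemma pair_incompat (hF : MaxNested G F) (hGs : MaxNested G Gs)
    (hP : F \ Gs = {P}) (hQ : Gs \ F = {Q}) : ¬ Compat G P Q := by
  intro hc
  refine (pair_P_mem hP).2 (mem_of_compat hGs (hF.1.2.1 P (pair_P_mem hP).1) ?_)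
  intro T hT
  by_cases hTQ : T = Q
  · exact hTQ ▸ hc
  · exact hF.1.2.2 P (pair_P_mem hP).1 T (pair_inter_F hQ hT hTQ)

lemma pair_adj (hF : MaxNested G F) (hGs : MaxNested G Gs)
    (hP : F \ Gs = {P}) (hQ : Gs \ F = {Q}) :
    ∃ p ∈ P, ∃ q ∈ Q, G.Adj p q := by
  have h := pair_incompat hF hGs hP hQ
  have horth : ¬ Orth G P Q := fun ho => h (Or.inr (Or.inr ho))
  rw [Orth] at horth
  push_neg at horth
  exact horth

lemma pair_conn (hF : MaxNested G F) (hGs : MaxNested G Gs)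
    (hP : F \ Gs = {P}) (hQ : Gs \ F = {Q}) : Conn G (P ∪ Q) := by
  obtain ⟨p, hp, q, hq, hadj⟩ := pair_adj hF hGs hP hQ
  exact conn_union_adj (hF.1.2.1 P (pair_P_mem hP).1)
    (hGs.1.2.1 Q (pair_P_mem hQ).1) hp hq hadj

lemma pair_supp_mem_F (hF : MaxNested G F) (hGs : MaxNested G Gs)
    (hP : F \ Gs = {P}) (hQ : Gs \ F = {Q}) : P ∪ Q ∈ F := by
  obtain ⟨p0, hp0, q0, hq0, hadj0⟩ := pair_adj hF hGs hP hQ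
  refine mem_of_compat hF (pair_conn hF hGs hP hQ) (fun T hT => ?_)
  by_cases hTP : T = P
  · exact Or.inr (Or.inl (hTP ▸ Finset.subset_union_left))
  · have hTGs : T ∈ Gs := pair_inter_F hP hT hTP
    have hcP : Compat G T P := hF.1.2.2 T hT P (pair_P_mem hP).1
    have hcQ : Compat G T Q := hGs.1.2.2 T hTGs Q (pair_P_mem hQ).1
    rcases hcP with h | h | h
    · exact Or.inr (Or.inl (h.trans Finset.subset_union_left))
    · rcases hcQ with h' | h' | h'
      · exact Or.inr (Or.inl (h'.trans Finset.subset_union_right))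
      · exact Or.inl (Finset.union_subset h h')
      · exact absurd hadj0 (h' p0 (h hp0) q0 hq0)
    · rcases hcQ with h' | h' | h'
      · exact Or.inr (Or.inl (h'.trans Finset.subset_union_right))
      · exact absurd hadj0.symm (h q0 (h' hq0) p0 hp0)
      · refine Or.inr (Or.inr (fun x hx y hy hxy => ?_))
        rcases Finset.mem_union.mp hx with hx' | hx'
        · exact h y hy x hx' hxy.symm
        · exact h' y hy x hx' hxy.symm

lemma pair_supp_mem_G (hF : MaxNested G F) (hGs : MaxNested G Gs)
    (hP : F \ Gs = {P}) (hQ : Gs \ F = {Q}) : P ∪ Q ∈ Gs := by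
  have := pair_supp_mem_F hGs hF hQ hP
  rwa [Finset.union_comm] at this

lemma pair_Q_ssub (hF : MaxNested G F) (hGs : MaxNested G Gs)
    (hP : F \ Gs = {P}) (hQ : Gs \ F = {Q}) : Q ⊂ P ∪ Q := by
  refine Finset.ssubset_iff_subset_ne.mpr ⟨Finset.subset_union_right, fun h => ?_⟩
  exact (pair_P_mem hQ).2 (h ▸ pair_supp_mem_F hF hGs hP hQ)

lemma pair_isCC (hF : MaxNested G F) (hGs : MaxNested G Gs)
    (hP : F \ Gs = {P}) (hQ : Gs \ F = {Q}) {a : V}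
    (ha : (P ∪ Q) \ iN Gs (P ∪ Q) = {a}) : IsCC G ((P ∪ Q).erase a) Q := by
  set B := P ∪ Q with hBdef
  have hBG : B ∈ Gs := pair_supp_mem_G hF hGs hP hQ
  have hiN : iN Gs B = B.erase a := iN_eq_erase hGs hBG ha
  have hQB : Q ⊂ B := pair_Q_ssub hF hGs hP hQ
  have hQGs : Q ∈ Gs := (pair_P_mem hQ).1
  have hFam : B ∈ Gs.filter (fun T => Q ⊂ T) := Finset.mem_filter.mpr ⟨hBG, hQB⟩
  obtain ⟨Cs, hCs, hmin⟩ := (Gs.filter (fun T => Q ⊂ T)).exists_min_image Finset.card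
    ⟨B, hFam⟩
  rw [Finset.mem_filter] at hCs
  have hBCs : B ⊆ Cs := by
    by_cases hCsB : Cs = B
    · rw [hCsB]
    · obtain ⟨p0, hp0, q0, hq0, hadj0⟩ := pair_adj hF hGs hP hQ
      have hCsF : Cs ∈ F := pair_inter_F hQ hCs.1 hCs.2.ne'
      rcases hF.1.2.2 P (pair_P_mem hP).1 Cs hCsF with h | h | h
      · exact Finset.union_subset h hCs.2.1
      · exact absurd (Or.inr (Or.inl (hCs.2.1.trans h)))
          (pair_incompat hF hGs hP hQ)
      · exact absurd hadj0 (h p0 hp0 q0 (hCs.2.1 hq0))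
  have hCsB : Cs = B := (Finset.eq_of_subset_of_card_le hBCs (hmin B hFam)).symm
  obtain ⟨q, hq⟩ := conn_nonempty (hGs.1.2.1 Q hQGs)
  have hQiN : Q ⊆ B.erase a := by
    rw [← hiN]
    exact fun x hx => mem_iN.mpr ⟨Q, hQGs, hQB, hx⟩
  have hK : IsCC G (B.erase a) (ccOf G (B.erase a) q) := isCC_ccOf (hQiN hq)
  have hQK : Q ⊆ ccOf G (B.erase a) q := subset_cc_of_conn (hGs.1.2.1 Q hQGs) hQiN hK
    ⟨q, Finset.mem_inter.mpr ⟨hq, mem_ccOf (hQiN hq)⟩⟩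
  by_cases hQKeq : Q = ccOf G (B.erase a) q
  · exact hQKeq ▸ hK
  · exfalso
    have hKGs : ccOf G (B.erase a) q ∈ Gs := comps_mem_of_max hGs hBG ha hK
    have hKFam : ccOf G (B.erase a) q ∈ Gs.filter (fun T => Q ⊂ T) :=
      Finset.mem_filter.mpr ⟨hKGs, Finset.ssubset_iff_subset_ne.mpr ⟨hQK, hQKeq⟩⟩
    have hKlt : (ccOf G (B.erase a) q).card < B.card :=
      Finset.card_lt_card (Finset.ssubset_of_subset_of_ssubset hK.1
        (Finset.erase_ssubset (uncovered ha).1))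
    have := hmin _ hKFam
    rw [hCsB] at this
    omega

lemma pair_b_mem_Q (hF : MaxNested G F) (hGs : MaxNested G Gs)
    (hP : F \ Gs = {P}) (hQ : Gs \ F = {Q}) {b : V}
    (hb : (P ∪ Q) \ iN F (P ∪ Q) = {b}) : b ∈ Q ∧ b ∉ P := by
  have hPss : P ⊂ P ∪ Q := by
    have := pair_Q_ssub hGs hF hQ hP
    rwa [Finset.union_comm] at this
  have hbP : b ∉ P := (uncovered hb).2 P (pair_P_mem hP).1 hPss
  have hbB : b ∈ P ∪ Q := (uncovered hb).1
  rcases Finset.mem_union.mp hbB with h | h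
  · exact absurd h hbP
  · exact ⟨h, hbP⟩

lemma pair_a_ne_b (hF : MaxNested G F) (hGs : MaxNested G Gs)
    (hP : F \ Gs = {P}) (hQ : Gs \ F = {Q}) {a b : V}
    (ha : (P ∪ Q) \ iN Gs (P ∪ Q) = {a}) (hb : (P ∪ Q) \ iN F (P ∪ Q) = {b}) :
    a ≠ b := by
  intro hab
  have hQcc : IsCC G ((P ∪ Q).erase a) Q := pair_isCC hF hGs hP hQ ha
  have hb' : (Q ∪ P) \ iN F (Q ∪ P) = {b} := by rwa [Finset.union_comm]
  have hPcc : IsCC G ((P ∪ Q).erase b) P := by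
    have := pair_isCC hGs hF hQ hP hb'
    rwa [Finset.union_comm] at this
  rw [← hab] at hPcc
  have hPQ : P ≠ Q := fun h => (pair_P_mem hP).2 (h ▸ (pair_P_mem hQ).1)
  exact pair_incompat hF hGs hP hQ (Or.inr (Or.inr (isCC_orth hPcc hQcc hPQ)))

lemma pair_determined (hF : MaxNested G F) (hGs : MaxNested G Gs)
    (hP : F \ Gs = {P}) (hQ : Gs \ F = {Q}) {a b : V}
    (ha : (P ∪ Q) \ iN Gs (P ∪ Q) = {a}) (hb : (P ∪ Q) \ iN F (P ∪ Q) = {b}) :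
    Q = ccOf G ((P ∪ Q).erase a) b ∧ P = ccOf G ((P ∪ Q).erase b) a := by
  have hbQ : b ∈ Q := (pair_b_mem_Q hF hGs hP hQ hb).1
  have ha' : (Q ∪ P) \ iN Gs (Q ∪ P) = {a} := by rwa [Finset.union_comm]
  have hb' : (Q ∪ P) \ iN F (Q ∪ P) = {b} := by rwa [Finset.union_comm]
  have haP : a ∈ P := by
    have := (pair_b_mem_Q hGs hF hQ hP ha').1
    exact this
  constructor
  · exact ccOf_eq (pair_isCC hF hGs hP hQ ha) hbQ
  · have := pair_isCC hGs hF hQ hP hb'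
    rw [Finset.union_comm] at this
    exact ccOf_eq this haP

lemma suppP_eq (hP : F \ Gs = {P}) (hQ : Gs \ F = {Q}) : suppP F Gs = P ∪ Q := by
  rw [suppP, hP, hQ]
  rw [Finset.sup_union, Finset.sup_singleton, Finset.sup_singleton]
  rfl

lemma stmt7_part1 {F' Gs' : Finset (Finset V)}
    (hF : MaxNested G F) (hGs : MaxNested G Gs) (hF' : MaxNested G F')
    (hGs' : MaxNested G Gs') (e : ElemPair F Gs) (e' : ElemPair F' Gs') :
    ((F \ Gs = F' \ Gs' ∧ Gs \ F = Gs' \ F') ↔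
      (suppP F Gs = suppP F' Gs' ∧
       (∀ a : V, suppP F Gs \ iN Gs (suppP F Gs) = {a} ↔
          suppP F' Gs' \ iN Gs' (suppP F' Gs') = {a}) ∧
       (∀ b : V, suppP F Gs \ iN F (suppP F Gs) = {b} ↔
          suppP F' Gs' \ iN F' (suppP F' Gs') = {b}))) := by
  obtain ⟨P, hP⟩ := Finset.card_eq_one.mp e.1
  obtain ⟨Q, hQ⟩ := Finset.card_eq_one.mp e.2
  obtain ⟨P', hP'⟩ := Finset.card_eq_one.mp e'.1
  obtain ⟨Q', hQ'⟩ := Finset.card_eq_one.mp e'.2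
  rw [suppP_eq hP hQ, suppP_eq hP' hQ', hP, hQ, hP', hQ']
  obtain ⟨a0, ha0⟩ := alpha_exists hGs (pair_supp_mem_G hF hGs hP hQ)
  obtain ⟨a0', ha0'⟩ := alpha_exists hGs' (pair_supp_mem_G hF' hGs' hP' hQ')
  obtain ⟨b0, hb0⟩ := alpha_exists hF (pair_supp_mem_F hF hGs hP hQ)
  obtain ⟨b0', hb0'⟩ := alpha_exists hF' (pair_supp_mem_F hF' hGs' hP' hQ')
  constructor
  · rintro ⟨h1, h2⟩
    have hPP' : P = P' := Finset.singleton_inj.mp h1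
    have hQQ' : Q = Q' := Finset.singleton_inj.mp h2
    subst hPP'; subst hQQ'
    have haa : a0 = a0' := cc_vertex_unique (pair_conn hF hGs hP hQ)
      (uncovered ha0).1 (pair_isCC hF hGs hP hQ ha0) (pair_isCC hF' hGs' hP' hQ' ha0')
    have hbb : b0 = b0' := by
      have h1 : IsCC G ((P ∪ Q).erase b0) P := by
        have := pair_isCC hGs hF hQ hP (by rwa [Finset.union_comm] at hb0)
        rwa [Finset.union_comm] at this
      have h2 : IsCC G ((P ∪ Q).erase b0') P := by
        have := pair_isCC hGs' hF' hQ' hP' (by rwa [Finset.union_comm] at hb0')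
        rwa [Finset.union_comm] at this
      exact cc_vertex_unique (pair_conn hF hGs hP hQ) (uncovered hb0).1 h1 h2
    refine ⟨rfl, fun a => ?_, fun b => ?_⟩
    · rw [ha0, ha0', ← haa]
    · rw [hb0, hb0', ← hbb]
  · rintro ⟨hsupp, hiffa, hiffb⟩
    have ha0'' : (P' ∪ Q') \ iN Gs' (P' ∪ Q') = {a0} := (hiffa a0).mp ha0
    have hb0'' : (P' ∪ Q') \ iN F' (P' ∪ Q') = {b0} := (hiffb b0).mp hb0
    have haa : a0' = a0 := Finset.singleton_inj.mp (ha0'.symm.trans ha0'')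
    have hbb : b0' = b0 := Finset.singleton_inj.mp (hb0'.symm.trans hb0'')
    have hd := pair_determined hF hGs hP hQ ha0 hb0
    have hd' := pair_determined hF' hGs' hP' hQ' ha0' hb0'
    rw [haa, hbb, ← hsupp] at hd'
    have hQQ : Q = Q' := hd.1.trans hd'.1.symm
    have hPP : P = P' := hd.2.trans hd'.2.symm
    rw [hPP, hQQ]
    exact ⟨rfl, rfl⟩

end Pair

noncomputable def pick (S : Finset V) (d : V) : V :=
  if h : S.Nonempty then h.choose else d

lemma pick_mem {S : Finset V} {d : V} (h : S.Nonempty) : pick S d ∈ S := by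
  rw [pick, dif_pos h]; exact h.choose_spec

noncomputable def pvc (B C1 : Finset V) (u w dflt : V) : Finset V → V := fun S =>
  if S = B then u else if S = C1 then w
  else if B ⊂ S then pick (S \ B) dflt else pick S dflt

lemma diff_helper {X X' U : Finset (Finset V)} {S P Q : Finset V}
    (h1 : X \ X' = {P}) (h2 : X' \ X = {Q})
    (hPS : P ≠ S) (hPU : P ∉ U) (hQS : Q ≠ S) (hQU : Q ∉ U) :
    insert S (X ∪ U) \ insert S (X' ∪ U) = {P} ∧
    insert S (X' ∪ U) \ insert S (X ∪ U) = {Q} := by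
  have k1 : ∀ T : Finset V, T ∈ X ∧ T ∉ X' ↔ T = P := fun T => by
    rw [← Finset.mem_sdiff, h1, Finset.mem_singleton]
  have k2 : ∀ T : Finset V, T ∈ X' ∧ T ∉ X ↔ T = Q := fun T => by
    rw [← Finset.mem_sdiff, h2, Finset.mem_singleton]
  constructor
  · ext T
    simp only [Finset.mem_sdiff, Finset.mem_insert, Finset.mem_union, Finset.mem_singleton]
    have e1 : T = P → T ≠ S := fun h => h ▸ hPS
    have e2 : T = P → T ∉ U := fun h => h ▸ hPU
    have := k1 T
    tauto
  · ext T
    simp only [Finset.mem_sdiff, Finset.mem_insert, Finset.mem_union, Finset.mem_singleton]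
    have e1 : T = Q → T ≠ S := fun h => h ▸ hQS
    have e2 : T = Q → T ∉ U := fun h => h ▸ hQU
    have := k2 T
    tauto

lemma singleton_sdiff_ne {a b : Finset V} (h : a ≠ b) :
    ({a} : Finset (Finset V)) \ {b} = {a} := by
  ext T
  simp only [Finset.mem_sdiff, Finset.mem_singleton]
  constructor
  · exact fun h' => h'.1
  · rintro rfl; exact ⟨rfl, h⟩

lemma sdiff_erase_self {B : Finset V} {a : V} (ha : a ∈ B) : B \ B.erase a = {a} := by
  ext x
  simp only [Finset.mem_sdiff, Finset.mem_erase, Finset.mem_singleton, not_and]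
  constructor
  · rintro ⟨hx, h⟩
    by_contra hne
    exact (h hne) hx
  · rintro rfl
    exact ⟨ha, fun h _ => absurd rfl h⟩

lemma finset_biUnion_union {s t : Finset (Finset V)} {f : Finset V → Finset (Finset V)} :
    (s ∪ t).biUnion f = s.biUnion f ∪ t.biUnion f := by
  ext x
  simp only [Finset.mem_biUnion, Finset.mem_union, or_and_right, exists_or]

lemma cc_cover {B : Finset V} (hB : Conn G B) {α β : V} (hα : α ∈ B) (hβ : β ∈ B)
    (hne : α ≠ β) :
    B ⊆ ccOf G (B.erase β) α ∪ ccOf G (B.erase α) β := by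
  have hαW1 : α ∈ B.erase β := Finset.mem_erase.mpr ⟨hne, hα⟩
  have hβW2 : β ∈ B.erase α := Finset.mem_erase.mpr ⟨hne.symm, hβ⟩
  have hCb : IsCC G (B.erase β) (ccOf G (B.erase β) α) := isCC_ccOf hαW1
  have hCa : IsCC G (B.erase α) (ccOf G (B.erase α) β) := isCC_ccOf hβW2
  intro γ hγ
  have hreach : Reach G B γ α := (conn_iff.mp hB).2 γ hγ α hα
  clear hγ
  induction hreach using Relation.ReflTransGen.head_induction_on with
  | refl => exact Finset.mem_union_left _ (mem_ccOf hαW1)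
  | @head c d hrel hrest ih =>
      rcases Finset.mem_union.mp ih with hd | hd
      · by_cases hcβ : c = β
        · exact Finset.mem_union_right _ (by rw [hcβ]; exact mem_ccOf hβW2)
        · exact Finset.mem_union_left _
            (hCb.closed hd (Finset.mem_erase.mpr ⟨hcβ, hrel.1⟩) hrel.2.2.symm)
      · by_cases hcα : c = α
        · exact Finset.mem_union_left _ (by rw [hcα]; exact mem_ccOf hαW1)
        · exact Finset.mem_union_right _
            (hCa.closed hd (Finset.mem_erase.mpr ⟨hcα, hrel.1⟩) hrel.2.2.symm)

lemma stmt7_part2 (hG : G.Connected) {B : Finset V} (hB : Conn G B) {α β : V}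
    (hα : α ∈ B) (hβ : β ∈ B) (hne : α ≠ β) :
    ∃ F Gs : Finset (Finset V), MaxNested G F ∧ MaxNested G Gs ∧ ElemPair F Gs ∧
      suppP F Gs = B ∧ B \ iN Gs B = {α} ∧ B \ iN F B = {β} := by
  classical
  have hαW1 : α ∈ B.erase β := Finset.mem_erase.mpr ⟨hne, hα⟩
  have hβW2 : β ∈ B.erase α := Finset.mem_erase.mpr ⟨hne.symm, hβ⟩
  set Cb := ccOf G (B.erase β) α with hCbdef
  set Ca := ccOf G (B.erase α) β with hCadef
  have hCbcc : IsCC G (B.erase β) Cb := isCC_ccOf hαW1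
  have hCacc : IsCC G (B.erase α) Ca := isCC_ccOf hβW2
  have hαCb : α ∈ Cb := mem_ccOf hαW1
  have hβCa : β ∈ Ca := mem_ccOf hβW2
  have hβCb : β ∉ Cb := fun h => (Finset.mem_erase.mp (hCbcc.1 h)).1 rfl
  have hαCa : α ∉ Ca := fun h => (Finset.mem_erase.mp (hCacc.1 h)).1 rfl
  have hCbB : Cb ⊆ B := hCbcc.1.trans (Finset.erase_subset _ _)
  have hCaB : Ca ⊆ B := hCacc.1.trans (Finset.erase_subset _ _)
  have hCbneB : Cb ≠ B := fun h => hβCb (by rw [h]; exact hβ)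
  have hCaneB : Ca ≠ B := fun h => hαCa (by rw [h]; exact hα)
  have hCbCa : Cb ≠ Ca := fun h => hαCa (by rw [← h]; exact hαCb)
  set pvF := pvc B Cb β α α with hpvFdef
  set pvG := pvc B Ca α β α with hpvGdef
  have pvF_B : pvF B = β := by rw [hpvFdef]; simp [pvc]
  have pvG_B : pvG B = α := by rw [hpvGdef]; simp [pvc]
  have pvF_Cb : pvF Cb = α := by rw [hpvFdef]; simp [pvc, hCbneB]
  have pvG_Ca : pvG Ca = β := by rw [hpvGdef]; simp [pvc, hCaneB]
  have pv_agree : ∀ T, T ≠ B → T ≠ Cb → T ≠ Ca → pvF T = pvG T := by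
    intro T h1 h2 h3
    rw [hpvFdef, hpvGdef]
    simp [pvc, h1, h2, h3]
  have hvalF : ValidPv G pvF := by
    intro S hS
    rw [hpvFdef]
    simp only [pvc]
    split_ifs with h1 h2 h3
    · exact h1 ▸ hβ
    · exact h2 ▸ hαCb
    · exact Finset.sdiff_subset (pick_mem (Finset.sdiff_nonempty.mpr h3.not_subset))
    · exact pick_mem hS
  have hvalG : ValidPv G pvG := by
    intro S hS
    rw [hpvGdef]
    simp only [pvc]
    split_ifs with h1 h2 h3
    · exact h1 ▸ hα
    · exact h2 ▸ hβCa
    · exact Finset.sdiff_subset (pick_mem (Finset.sdiff_nonempty.mpr h3.not_subset))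
    · exact pick_mem hS
  have houtF : ∀ T, B ⊆ T → T ≠ B → pvF T ∉ B := by
    intro T hBT hTB
    have hTCb : T ≠ Cb := fun h => hβCb (by rw [← h]; exact hBT hβ)
    have hssub : B ⊂ T := Finset.ssubset_iff_subset_ne.mpr ⟨hBT, fun h => hTB h.symm⟩
    rw [hpvFdef]
    simp only [pvc, if_neg hTB, if_neg hTCb, if_pos hssub]
    exact fun h => (Finset.mem_sdiff.mp
      (pick_mem (Finset.sdiff_nonempty.mpr hssub.not_subset))).2 h
  have houtG : ∀ T, B ⊆ T → T ≠ B → pvG T ∉ B := by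
    intro T hBT hTB
    have hTCa : T ≠ Ca := fun h => hαCa (by rw [← h]; exact hBT hα)
    have hssub : B ⊂ T := Finset.ssubset_iff_subset_ne.mpr ⟨hBT, fun h => hTB h.symm⟩
    rw [hpvGdef]
    simp only [pvc, if_neg hTB, if_neg hTCa, if_pos hssub]
    exact fun h => (Finset.mem_sdiff.mp
      (pick_mem (Finset.sdiff_nonempty.mpr hssub.not_subset))).2 h
  have hsame1 : ∀ S : Finset V, S ∩ B = ∅ → buildN G pvF S = buildN G pvG S := by
    intro S hS
    refine buildN_congr S (fun T hT => pv_agree T ?_ ?_ ?_)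
    · rintro rfl
      exact Finset.eq_empty_iff_forall_notMem.mp hS α (Finset.mem_inter.mpr ⟨hT hα, hα⟩)
    · rintro rfl
      exact Finset.eq_empty_iff_forall_notMem.mp hS α
        (Finset.mem_inter.mpr ⟨hT hαCb, hCbB hαCb⟩)
    · rintro rfl
      exact Finset.eq_empty_iff_forall_notMem.mp hS β
        (Finset.mem_inter.mpr ⟨hT hβCa, hCaB hβCa⟩)
  have hsame2 : ∀ S : Finset V, S ⊆ (B.erase β).erase α →
      buildN G pvF S = buildN G pvG S := by
    intro S hS
    refine buildN_congr S (fun T hT => pv_agree T ?_ ?_ ?_)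
    · intro h
      have hβT : β ∈ T := by rw [h]; exact hβ
      exact (Finset.mem_erase.mp (Finset.erase_subset _ _ ((hT.trans hS) hβT))).1 rfl
    · intro h
      have hx : α ∈ T := by rw [h]; exact hαCb
      exact (Finset.mem_erase.mp ((hT.trans hS) hx)).1 rfl
    · intro h
      have hx : β ∈ T := by rw [h]; exact hβCa
      exact (Finset.mem_erase.mp (Finset.erase_subset _ _ ((hT.trans hS) hx))).1 rfl
  have hB2W1 : (B.erase β).erase α ⊆ B.erase β := Finset.erase_subset _ _
  have hB2noα : α ∉ (B.erase β).erase α := fun h => (Finset.mem_erase.mp h).1 rfl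
  have hB2noβ : β ∉ (B.erase β).erase α := fun h =>
    (Finset.mem_erase.mp (hB2W1 h)).1 rfl
  have hUBsub : ∀ T ∈ (comps G ((B.erase β).erase α)).biUnion (buildN G pvG),
      T ⊆ (B.erase β).erase α := by
    intro T hT
    obtain ⟨K, hK, hTK⟩ := Finset.mem_biUnion.mp hT
    exact ((buildN_subset_conn hvalG K (mem_comps.mp hK).2.1 T hTK).1).trans
      (mem_comps.mp hK).1
  have hCbUB : Cb ∉ (comps G ((B.erase β).erase α)).biUnion (buildN G pvG) :=
    fun h => hB2noα (hUBsub Cb h hαCb)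
  have hCaUB : Ca ∉ (comps G ((B.erase β).erase α)).biUnion (buildN G pvG) :=
    fun h => hB2noβ (hUBsub Ca h hβCa)
  have hCbe_sub : Cb.erase α ⊆ (B.erase β).erase α := fun x hx =>
    Finset.mem_erase.mpr ⟨(Finset.mem_erase.mp hx).1, hCbcc.1 (Finset.mem_erase.mp hx).2⟩
  have hCae_sub : Ca.erase β ⊆ (B.erase β).erase α := by
    intro x hx
    rw [Finset.erase_right_comm]
    exact Finset.mem_erase.mpr ⟨(Finset.mem_erase.mp hx).1,
      hCacc.1 (Finset.mem_erase.mp hx).2⟩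
  have hFB : buildN G pvF B =
      insert B ({Cb} ∪ (comps G ((B.erase β).erase α)).biUnion (buildN G pvG)) := by
    rw [buildN_eq (by rw [pvF_B]; exact hβ), pvF_B]
    congr 1
    rw [← Finset.insert_erase (mem_comps.mpr hCbcc), Finset.biUnion_insert]
    have h1 : buildN G pvF Cb =
        insert Cb ((comps G (Cb.erase α)).biUnion (buildN G pvG)) := by
      rw [buildN_eq (by rw [pvF_Cb]; exact hαCb), pvF_Cb]
      congr 1
      refine Finset.biUnion_congr rfl (fun K hK => hsame2 K ?_)
      exact (mem_comps.mp hK).1.trans hCbe_sub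
    have h2 : ((comps G (B.erase β)).erase Cb).biUnion (buildN G pvF) =
        ((comps G (B.erase β)).erase Cb).biUnion (buildN G pvG) := by
      refine Finset.biUnion_congr rfl (fun D hD => hsame2 D ?_)
      rw [Finset.mem_erase] at hD
      intro x hx
      refine Finset.mem_erase.mpr ⟨fun he => hD.1 ?_, (mem_comps.mp hD.2).1 hx⟩
      exact isCC_unique (mem_comps.mp hD.2) hCbcc (he ▸ hx) hαCb
    rw [h1, h2, Finset.insert_eq, Finset.union_assoc, ← finset_biUnion_union]
    congr 2
    rw [comps_split hαW1, ← hCbdef, Finset.union_comm]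
  have hGB : buildN G pvG B =
      insert B ({Ca} ∪ (comps G ((B.erase β).erase α)).biUnion (buildN G pvG)) := by
    rw [buildN_eq (by rw [pvG_B]; exact hα), pvG_B]
    congr 1
    rw [← Finset.insert_erase (mem_comps.mpr hCacc), Finset.biUnion_insert]
    have h1 : buildN G pvG Ca =
        insert Ca ((comps G (Ca.erase β)).biUnion (buildN G pvG)) := by
      rw [buildN_eq (by rw [pvG_Ca]; exact hβCa), pvG_Ca]
    rw [h1, Finset.insert_eq, Finset.union_assoc, ← finset_biUnion_union]
    congr 2
    rw [show (B.erase β).erase α = (B.erase α).erase β from Finset.erase_right_comm,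
      comps_split hβW2, ← hCadef, Finset.union_comm]
  have main : ∀ S : Finset V, Conn G S → B ⊆ S →
      buildN G pvF S \ buildN G pvG S = {Cb} ∧
      buildN G pvG S \ buildN G pvF S = {Ca} := by
    intro S
    induction S using Finset.strongInduction with
    | _ S ih =>
      intro hS hBS
      by_cases hSB : S = B
      · subst hSB
        rw [hFB, hGB]
        exact diff_helper (singleton_sdiff_ne hCbCa) (singleton_sdiff_ne hCbCa.symm)
          hCbneB hCbUB hCaneB hCaUB
      · have hvS : pvF S ∈ S := hvalF S ⟨α, hBS hα⟩
        have hvB : pvF S ∉ B := houtF S hBS hSB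
        have hSCb : S ≠ Cb := fun h => hβCb (by rw [← h]; exact hBS hβ)
        have hSCa : S ≠ Ca := fun h => hαCa (by rw [← h]; exact hBS hα)
        have hpvGS : pvG S = pvF S := (pv_agree S hSB hSCb hSCa).symm
        have hαSe : α ∈ S.erase (pvF S) :=
          Finset.mem_erase.mpr ⟨fun h => hvB (h ▸ hα), hBS hα⟩
        have hBSe : B ⊆ S.erase (pvF S) := fun x hx =>
          Finset.mem_erase.mpr ⟨fun h => hvB (h ▸ hx), hBS hx⟩
        have hC0 : IsCC G (S.erase (pvF S)) (ccOf G (S.erase (pvF S)) α) :=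
          isCC_ccOf hαSe
        have hBC0 : B ⊆ ccOf G (S.erase (pvF S)) α := subset_cc_of_conn hB hBSe hC0
          ⟨α, Finset.mem_inter.mpr ⟨hα, mem_ccOf hαSe⟩⟩
        have hC0ss : ccOf G (S.erase (pvF S)) α ⊂ S := comp_ssub hvS hC0
        have hihC := ih _ hC0ss hC0.2.1 hBC0
        have hR0 : ((comps G (S.erase (pvF S))).erase
              (ccOf G (S.erase (pvF S)) α)).biUnion (buildN G pvF) =
            ((comps G (S.erase (pvF S))).erase
              (ccOf G (S.erase (pvF S)) α)).biUnion (buildN G pvG) := by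
          refine Finset.biUnion_congr rfl (fun D hD => hsame1 D ?_)
          rw [Finset.mem_erase] at hD
          rw [Finset.eq_empty_iff_forall_notMem]
          intro x hx
          rw [Finset.mem_inter] at hx
          exact hD.1 (isCC_unique (mem_comps.mp hD.2) hC0 hx.1 (hBC0 hx.2))
        have hFS : buildN G pvF S = insert S (buildN G pvF (ccOf G (S.erase (pvF S)) α)
            ∪ ((comps G (S.erase (pvF S))).erase
              (ccOf G (S.erase (pvF S)) α)).biUnion (buildN G pvG)) := by
          have hsplit : (comps G (S.erase (pvF S))).biUnion (buildN G pvF) =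
              buildN G pvF (ccOf G (S.erase (pvF S)) α) ∪
              ((comps G (S.erase (pvF S))).erase
                (ccOf G (S.erase (pvF S)) α)).biUnion (buildN G pvF) := by
            conv_lhs => rw [← Finset.insert_erase (mem_comps.mpr hC0)]
            rw [Finset.biUnion_insert]
          rw [buildN_eq hvS, hsplit, hR0]
        have hGS : buildN G pvG S = insert S (buildN G pvG (ccOf G (S.erase (pvF S)) α)
            ∪ ((comps G (S.erase (pvF S))).erase
              (ccOf G (S.erase (pvF S)) α)).biUnion (buildN G pvG)) := by
          have hsplit : (comps G (S.erase (pvF S))).biUnion (buildN G pvG) =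
              buildN G pvG (ccOf G (S.erase (pvF S)) α) ∪
              ((comps G (S.erase (pvF S))).erase
                (ccOf G (S.erase (pvF S)) α)).biUnion (buildN G pvG) := by
            conv_lhs => rw [← Finset.insert_erase (mem_comps.mpr hC0)]
            rw [Finset.biUnion_insert]
          rw [buildN_eq (by rw [hpvGS]; exact hvS), hpvGS, hsplit]
        have hdisj : ∀ T ∈ ((comps G (S.erase (pvF S))).erase
            (ccOf G (S.erase (pvF S)) α)).biUnion (buildN G pvG), T ∩ B = ∅ := by
          intro T hT
          obtain ⟨D, hD, hTD⟩ := Finset.mem_biUnion.mp hT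
          rw [Finset.mem_erase] at hD
          rw [Finset.eq_empty_iff_forall_notMem]
          intro x hx
          rw [Finset.mem_inter] at hx
          have hxD : x ∈ D :=
            (buildN_subset_conn hvalG D (mem_comps.mp hD.2).2.1 T hTD).1 hx.1
          exact hD.1 (isCC_unique (mem_comps.mp hD.2) hC0 hxD (hBC0 hx.2))
        rw [hFS, hGS]
        refine diff_helper hihC.1 hihC.2
          (fun h => hβCb (by rw [h]; exact hBS hβ)) ?_
          (fun h => hαCa (by rw [h]; exact hBS hα)) ?_
        · intro h
          have := hdisj Cb h
          exact Finset.eq_empty_iff_forall_notMem.mp this α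
            (Finset.mem_inter.mpr ⟨hαCb, hα⟩)
        · intro h
          have := hdisj Ca h
          exact Finset.eq_empty_iff_forall_notMem.mp this β
            (Finset.mem_inter.mpr ⟨hβCa, hβ⟩)
  have hconnuniv : Conn G Finset.univ := conn_univ_of_connected hG
  obtain ⟨hd1, hd2⟩ := main Finset.univ hconnuniv (Finset.subset_univ B)
  have hGBsub : buildN G pvG B ⊆ buildN G pvG Finset.univ :=
    buildN_sub_of_chain hB hvalG houtG Finset.univ (Finset.subset_univ B)
  have hFBsub : buildN G pvF B ⊆ buildN G pvF Finset.univ :=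
    buildN_sub_of_chain hB hvalF houtF Finset.univ (Finset.subset_univ B)
  have hiNG : iN (buildN G pvG Finset.univ) B = B.erase α := by
    apply Finset.Subset.antisymm
    · intro x hx
      obtain ⟨T, hTG, hTB, hxT⟩ := mem_iN.mp hx
      rcases buildN_classify hB houtG hvalG Finset.univ (Finset.subset_univ B) T hTG
        with h | h | h
      · exact absurd (Finset.Subset.antisymm hTB.subset h) hTB.ne
      · exact absurd (Finset.mem_inter.mpr ⟨hxT, hTB.subset hxT⟩)
          (by rw [h]; exact Finset.notMem_empty x)
      · rw [hGB] at h
        rcases Finset.mem_insert.mp h with rfl | h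
        · exact absurd rfl hTB.ne
        · rcases Finset.mem_union.mp h with h | h
          · rw [Finset.mem_singleton] at h
            exact hCacc.1 (h ▸ hxT)
          · have hx2 := hUBsub T h hxT
            rw [Finset.mem_erase] at hx2
            exact Finset.mem_erase.mpr ⟨hx2.1, Finset.erase_subset _ _ hx2.2⟩
    · intro x hx
      have hK : IsCC G (B.erase α) (ccOf G (B.erase α) x) := isCC_ccOf hx
      have hKB : ccOf G (B.erase α) x ⊂ B :=
        Finset.ssubset_of_subset_of_ssubset hK.1 (Finset.erase_ssubset hα)
      have hKmem : ccOf G (B.erase α) x ∈ buildN G pvG Finset.univ := by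
        by_cases hKCa : ccOf G (B.erase α) x = Ca
        · refine hGBsub ?_
          rw [hGB, hKCa]
          exact Finset.mem_insert_of_mem (Finset.mem_union_left _
            (Finset.mem_singleton_self Ca))
        · have h1 : ccOf G (B.erase α) x ∈ (comps G (B.erase α)).erase Ca :=
            Finset.mem_erase.mpr ⟨hKCa, mem_comps.mpr hK⟩
          have h2 : ccOf G (B.erase α) x ∈ comps G ((B.erase β).erase α) := by
            rw [show (B.erase β).erase α = (B.erase α).erase β from
              Finset.erase_right_comm, comps_split hβW2, ← hCadef]
            exact Finset.mem_union_left _ h1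
          refine hGBsub ?_
          rw [hGB]
          exact Finset.mem_insert_of_mem (Finset.mem_union_right _
            (Finset.mem_biUnion.mpr ⟨_, h2, self_mem_buildN⟩))
      exact mem_iN.mpr ⟨_, hKmem, hKB, mem_ccOf hx⟩
  have hiNF : iN (buildN G pvF Finset.univ) B = B.erase β := by
    apply Finset.Subset.antisymm
    · intro x hx
      obtain ⟨T, hTG, hTB, hxT⟩ := mem_iN.mp hx
      rcases buildN_classify hB houtF hvalF Finset.univ (Finset.subset_univ B) T hTG
        with h | h | h
      · exact absurd (Finset.Subset.antisymm hTB.subset h) hTB.ne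
      · exact absurd (Finset.mem_inter.mpr ⟨hxT, hTB.subset hxT⟩)
          (by rw [h]; exact Finset.notMem_empty x)
      · rw [hFB] at h
        rcases Finset.mem_insert.mp h with rfl | h
        · exact absurd rfl hTB.ne
        · rcases Finset.mem_union.mp h with h | h
          · rw [Finset.mem_singleton] at h
            exact hCbcc.1 (h ▸ hxT)
          · exact Finset.erase_subset _ _ (hUBsub T h hxT)
    · intro x hx
      have hK : IsCC G (B.erase β) (ccOf G (B.erase β) x) := isCC_ccOf hx
      have hKB : ccOf G (B.erase β) x ⊂ B :=
        Finset.ssubset_of_subset_of_ssubset hK.1 (Finset.erase_ssubset hβ)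
      have hKmem : ccOf G (B.erase β) x ∈ buildN G pvF Finset.univ := by
        by_cases hKCb : ccOf G (B.erase β) x = Cb
        · refine hFBsub ?_
          rw [hFB, hKCb]
          exact Finset.mem_insert_of_mem (Finset.mem_union_left _
            (Finset.mem_singleton_self Cb))
        · have h1 : ccOf G (B.erase β) x ∈ (comps G (B.erase β)).erase Cb :=
            Finset.mem_erase.mpr ⟨hKCb, mem_comps.mpr hK⟩
          have h2 : ccOf G (B.erase β) x ∈ comps G ((B.erase β).erase α) := by
            rw [comps_split hαW1, ← hCbdef]
            exact Finset.mem_union_left _ h1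
          refine hFBsub ?_
          rw [hFB]
          exact Finset.mem_insert_of_mem (Finset.mem_union_right _
            (Finset.mem_biUnion.mpr ⟨_, h2, self_mem_buildN⟩))
      exact mem_iN.mpr ⟨_, hKmem, hKB, mem_ccOf hx⟩
  refine ⟨buildN G pvF Finset.univ, buildN G pvG Finset.univ,
    buildN_maxNested hvalF hG, buildN_maxNested hvalG hG,
    ⟨by rw [hd1]; exact Finset.card_singleton _,
     by rw [hd2]; exact Finset.card_singleton _⟩, ?_, ?_, ?_⟩
  · rw [suppP_eq hd1 hd2]
    apply Finset.Subset.antisymm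
    · exact Finset.union_subset hCbB hCaB
    · exact cc_cover hB hα hβ hne
  · rw [hiNG]
    exact sdiff_erase_self hα
  · rw [hiNF]
    exact sdiff_erase_self hβ

end More


/-- The map `(Gs,F) ↦ (supp(Gs,F); α^{supp}_{Gs}, α^{supp}_F)` induces a
bijection between equivalence classes of elementary pairs of maximal nested sets on `D`
and triples `(B; α, β)` of a connected subdiagram `B ⊆ D` with an ordered pair of distinct
vertices of `B`. -/
theorem stmt7 {V : Type*} [Fintype V] [DecidableEq V]
    (Gr : SimpleGraph V) (hGr : Gr.Connected) :
    (∀ F Gs F' Gs' : Finset (Finset V),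
      MaxNested Gr F → MaxNested Gr Gs → MaxNested Gr F' → MaxNested Gr Gs' →
      ElemPair F Gs → ElemPair F' Gs' →
      ((F \ Gs = F' \ Gs' ∧ Gs \ F = Gs' \ F') ↔
        (suppP F Gs = suppP F' Gs' ∧
         (∀ a : V, suppP F Gs \ iN Gs (suppP F Gs) = {a} ↔
            suppP F' Gs' \ iN Gs' (suppP F' Gs') = {a}) ∧
         (∀ b : V, suppP F Gs \ iN F (suppP F Gs) = {b} ↔
            suppP F' Gs' \ iN F' (suppP F' Gs') = {b})))) ∧
    (∀ B : Finset V, Conn Gr B → ∀ α ∈ B, ∀ β ∈ B, α ≠ β →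
      ∃ F Gs : Finset (Finset V), MaxNested Gr F ∧ MaxNested Gr Gs ∧ ElemPair F Gs ∧
        suppP F Gs = B ∧ B \ iN Gs B = {α} ∧ B \ iN F B = {β}) := by
  constructor
  · intro F Gs F' Gs' hF hGs hF' hGs' e e'
    exact stmt7_part1 hF hGs hF' hGs' e e'
  · intro B hB α hα β hβ hne
    exact stmt7_part2 hGr hB hα hβ hne
end

section
/- With the shuffle number s as above, if β and γ are disjoint subsets of a finite totally ordered set α, then (-1)^{s(β;α) - s(β; α\γ)} = (-1)^{|β|·|γ|} · (-1)^{s(γ;α) - s(γ; α\β)}. -/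
/-- The shuffle number `s(β;α)` of a subset `β` of a finite totally ordered set `α`:
the number of pairs `(b, a)` with `b ∈ β`, `a ∈ α \ β` and `a < b`. -/
def shuffle {ι : Type*} [LinearOrder ι] [DecidableEq ι] (β α : Finset ι) : ℕ :=
  ((β ×ˢ (α \ β)).filter fun p => p.2 < p.1).card

lemma shuffle_split {ι : Type*} [LinearOrder ι] [DecidableEq ι]
    (α β γ : Finset ι) (hγ : γ ⊆ α) (hd : Disjoint β γ) :
    shuffle β α = shuffle β (α \ γ) + ((β ×ˢ γ).filter fun p => p.2 < p.1).card := by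
  have hsplit : α \ β = ((α \ γ) \ β) ∪ γ := by
    ext x
    simp only [Finset.mem_sdiff, Finset.mem_union]
    constructor
    · rintro ⟨hxα, hxβ⟩
      by_cases h : x ∈ γ
      · exact Or.inr h
      · exact Or.inl ⟨⟨hxα, h⟩, hxβ⟩
    · rintro (⟨⟨hxα, _⟩, hxβ⟩ | h)
      · exact ⟨hxα, hxβ⟩
      · exact ⟨hγ h, fun hb => Finset.disjoint_left.mp hd hb h⟩
  unfold shuffle
  rw [hsplit, Finset.product_union, Finset.filter_union,
    Finset.card_union_of_disjoint]
  apply Finset.disjoint_left.mpr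
  intro p hp1 hp2
  simp only [Finset.mem_filter, Finset.mem_product, Finset.mem_sdiff] at hp1 hp2
  exact hp1.1.2.1.2 hp2.1.2

/-- For disjoint subsets `β, γ` of a finite totally ordered set `α`,
`(-1)^{s(β;α) - s(β;α\γ)} = (-1)^{|β|·|γ|} · (-1)^{s(γ;α) - s(γ;α\β)}`. -/
theorem stmt10 {ι : Type*} [LinearOrder ι] [DecidableEq ι]
    (α β γ : Finset ι) (hβ : β ⊆ α) (hγ : γ ⊆ α) (hd : Disjoint β γ) :
    ((-1 : ℤ)) ^ (shuffle β α - shuffle β (α \ γ)) =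
      (-1 : ℤ) ^ (β.card * γ.card) * (-1 : ℤ) ^ (shuffle γ α - shuffle γ (α \ β)) := by
  set A := ((β ×ˢ γ).filter fun p => p.2 < p.1).card with hA
  set B := ((γ ×ˢ β).filter fun p => p.2 < p.1).card with hB
  have h1 : shuffle β α - shuffle β (α \ γ) = A := by
    rw [shuffle_split α β γ hγ hd]; omega
  have h2 : shuffle γ α - shuffle γ (α \ β) = B := by
    rw [shuffle_split α γ β hβ hd.symm]; omega
  have hBA : B = ((β ×ˢ γ).filter fun p => p.1 < p.2).card := by
    apply Finset.card_bij' (fun p _ => Prod.swap p) (fun p _ => Prod.swap p)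
    · intro p hp
      simp only [Finset.mem_filter, Finset.mem_product] at hp ⊢
      exact ⟨⟨hp.1.2, hp.1.1⟩, hp.2⟩
    · intro p hp
      simp only [Finset.mem_filter, Finset.mem_product] at hp ⊢
      exact ⟨⟨hp.1.2, hp.1.1⟩, hp.2⟩
    · intro p _; simp
    · intro p _; simp
  have hAB : A + B = β.card * γ.card := by
    rw [hBA, hA]
    have key := Finset.card_filter_add_card_filter_not
      (s := β ×ˢ γ) (p := fun p => p.2 < p.1)
    rw [← Finset.card_product, ← key]
    congr 2
    apply Finset.filter_congr
    intro p hp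
    simp only [Finset.mem_product] at hp
    have hne : p.1 ≠ p.2 := fun h =>
      Finset.disjoint_left.mp hd hp.1 (h ▸ hp.2)
    constructor
    · intro h; exact not_lt.mpr h.le
    · intro h; exact lt_of_le_of_ne (not_lt.mp h) hne
  have hsq : ((-1 : ℤ) ^ B) * ((-1 : ℤ) ^ B) = 1 := by
    rw [← pow_add, ← two_mul, pow_mul]; norm_num
  rw [h1, h2, ← hAB, pow_add, mul_assoc, hsq, mul_one]
end

section
/- Let A be a complete topological algebra over C[[ħ]] and let a, b ∈ A be invertible elements such that a ≡ b mod ħ and a² = b². Then b = g a g^{-1}, where g = (b a^{-1})^{1/2} ∈ 1 + ħA is defined by the binomial power series applied to δ = b a^{-1} ∈ 1 + ħA. -/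
namespace Stmt12Aux

open PowerSeries Finset

variable {A : Type*} [Ring A] [Algebra (PowerSeries ℂ) A]

/-- `x` lies in `ħ^n A`. -/
def Jmem (n : ℕ) (x : A) : Prop := ∃ c : A, x = ((X : PowerSeries ℂ) ^ n) • c

lemma Jmem.add {n : ℕ} {x y : A} (hx : Jmem n x) (hy : Jmem n y) : Jmem n (x + y) := by
  obtain ⟨c, rfl⟩ := hx; obtain ⟨d, rfl⟩ := hy
  exact ⟨c + d, (smul_add _ _ _).symm⟩

lemma Jmem.neg {n : ℕ} {x : A} (hx : Jmem n x) : Jmem n (-x) := by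
  obtain ⟨c, rfl⟩ := hx; exact ⟨-c, (smul_neg _ _).symm⟩

lemma Jmem.sub {n : ℕ} {x y : A} (hx : Jmem n x) (hy : Jmem n y) : Jmem n (x - y) := by
  simpa [sub_eq_add_neg] using hx.add hy.neg

lemma Jmem.zero (n : ℕ) : Jmem n (0 : A) := ⟨0, by simp⟩

lemma Jmem.mul_left {n : ℕ} {x : A} (y : A) (hx : Jmem n x) : Jmem n (y * x) := by
  obtain ⟨c, rfl⟩ := hx; exact ⟨y * c, by rw [mul_smul_comm]⟩

lemma Jmem.mul_right {n : ℕ} {x : A} (y : A) (hx : Jmem n x) : Jmem n (x * y) := by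
  obtain ⟨c, rfl⟩ := hx; exact ⟨c * y, by rw [smul_mul_assoc]⟩

lemma Jmem.mul {m n : ℕ} {x y : A} (hx : Jmem m x) (hy : Jmem n y) : Jmem (m + n) (x * y) := by
  obtain ⟨c, rfl⟩ := hx; obtain ⟨d, rfl⟩ := hy
  refine ⟨c * d, ?_⟩
  rw [pow_add, mul_smul, smul_mul_assoc, mul_smul_comm]

lemma Jmem.mono {m n : ℕ} (h : m ≤ n) {x : A} (hx : Jmem n x) : Jmem m x := by
  obtain ⟨c, rfl⟩ := hx
  refine ⟨(X : PowerSeries ℂ) ^ (n - m) • c, ?_⟩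
  rw [← mul_smul, ← pow_add, Nat.add_sub_cancel' h]

lemma Jmem.pow {x : A} (hx : Jmem 1 x) : ∀ n : ℕ, Jmem n (x ^ n)
  | 0 => ⟨x ^ 0, by simp⟩
  | (n + 1) => by
      rw [pow_succ]
      exact (Jmem.pow hx n).mul hx

lemma Jmem_iff {n : ℕ} {x : A} :
    Jmem n x ↔ x ∈ ((Ideal.span {(X : PowerSeries ℂ)}) ^ n • ⊤ : Submodule (PowerSeries ℂ) A) := by
  rw [Ideal.span_singleton_pow, Submodule.ideal_span_singleton_smul]
  constructor
  · rintro ⟨c, rfl⟩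
    exact Submodule.smul_mem_pointwise_smul c _ ⊤ trivial
  · intro hx
    rw [← SetLike.mem_coe, Submodule.coe_pointwise_smul] at hx
    obtain ⟨c, -, rfl⟩ := hx
    exact ⟨c, rfl⟩

variable [IsAdicComplete (Ideal.span {(X : PowerSeries ℂ)}) A]

lemma haus {x : A} (h : ∀ n, Jmem n x) : x = 0 :=
  IsHausdorff.haus (I := Ideal.span {(X : PowerSeries ℂ)}) inferInstance x
    (fun n => SModEq.sub_mem.2 (by simpa using Jmem_iff.1 (h n)))

lemma limit (f : ℕ → A) (hf : ∀ m n, m ≤ n → Jmem m (f n - f m)) :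
    ∃ L : A, ∀ n, Jmem n (f n - L) := by
  obtain ⟨L, hL⟩ := IsPrecomplete.prec (I := Ideal.span {(X : PowerSeries ℂ)}) inferInstance
    (f := f) (fun {m n} h => SModEq.sub_mem.2 (Jmem_iff.1 (by
      rw [← neg_sub]; exact (hf m n h).neg)))
  exact ⟨L, fun n => by
    have := SModEq.sub_mem.1 (hL n)
    exact Jmem_iff.2 this⟩

lemma geom {x : A} (hx : Jmem 1 x) :
    ∃ M : A, (1 - x) * M = 1 ∧ M * (1 - x) = 1 ∧
      ∀ n, Jmem n (M - ∑ k ∈ range n, x ^ k) := by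
  set f : ℕ → A := fun n => ∑ k ∈ range n, x ^ k with hfdef
  have hcauchy : ∀ m n, m ≤ n → Jmem m (f n - f m) := by
    intro m n h
    induction n, h using Nat.le_induction with
    | base => simpa using Jmem.zero m
    | succ n hmn ih =>
        have : f (n + 1) - f m = (f n - f m) + x ^ n := by
          simp only [hfdef, sum_range_succ]; abel
        rw [this]
        exact ih.add ((hx.pow n).mono (le_trans hmn (Nat.le_refl n)))
  obtain ⟨M, hM⟩ := limit f hcauchy
  have key : ∀ n, Jmem n ((1 - x) * M - 1) := by
    intro n
    have h1 : (1 - x) * M - 1 = (1 - x) * (M - f n) + ((1 - x) * f n - 1) := by noncomm_ring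
    have h2 : (1 - x) * f n = 1 - x ^ n := mul_neg_geom_sum x n
    rw [h1, h2]
    have h3 : (1 : A) - x ^ n - 1 = -(x ^ n) := by abel
    rw [h3]
    exact (Jmem.mul_left _ (by rw [← neg_sub]; exact (hM n).neg : Jmem n (M - f n))).add (hx.pow n).neg
  have key2 : ∀ n, Jmem n (M * (1 - x) - 1) := by
    intro n
    have h1 : M * (1 - x) - 1 = (M - f n) * (1 - x) + (f n * (1 - x) - 1) := by noncomm_ring
    have h2 : f n * (1 - x) = 1 - x ^ n := geom_sum_mul_neg x n
    rw [h1, h2]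
    have h3 : (1 : A) - x ^ n - 1 = -(x ^ n) := by abel
    rw [h3]
    exact (Jmem.mul_right _ (by rw [← neg_sub]; exact (hM n).neg : Jmem n (M - f n))).add (hx.pow n).neg
  exact ⟨M, sub_eq_zero.1 (haus key), sub_eq_zero.1 (haus key2),
    fun n => (by rw [← neg_sub]; exact (hM n).neg : Jmem n (M - f n))⟩

end Stmt12Aux

namespace Stmt12Aux

/-- Newton-type iteration for the square root of `δ`. -/
def sseq {A : Type*} [Ring A] (δ half : A) : ℕ → A
  | 0 => 1
  | n + 1 => sseq δ half n + (δ - sseq δ half n * sseq δ half n) * half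

lemma comm_identity {B : Type*} [CommRing B] (δ g h : B) (h2 : h + h = 1) :
    δ - (g + (δ - g * g) * h) * (g + (δ - g * g) * h)
      = (δ - g * g) * (1 - g) - ((δ - g * g) * (δ - g * g)) * (h * h) := by
  linear_combination (-(δ - g * g) * g) * h2

end Stmt12Aux

section Main

open Stmt12Aux PowerSeries Finset

/-- Let `A` be a complete topological algebra over `ℂ[[ħ]]` (ħ-adically
complete and separated), and let `a`, `b` be invertible elements of `A` with `a ≡ b mod ħ`
and `a² = b²`. Then `b = g a g⁻¹`, where `g = (b a⁻¹)^{1/2} ∈ 1 + ħA` is a square root of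
`b a⁻¹` congruent to `1` mod `ħ`. -/
theorem stmt12 {A : Type*} [Ring A] [Algebra (PowerSeries ℂ) A]
    [IsAdicComplete (Ideal.span {(PowerSeries.X : PowerSeries ℂ)}) A]
    (a b : Aˣ)
    (hmod : ∃ c : A, (b : A) - (a : A) = (PowerSeries.X : PowerSeries ℂ) • c)
    (hsq : (a : A) * a = (b : A) * b) :
    ∃ g : Aˣ,
      (∃ c : A, (g : A) - 1 = (PowerSeries.X : PowerSeries ℂ) • c) ∧
      (g : A) * g * a = (b : A) ∧
      (b : A) = g * a * (g⁻¹ : Aˣ) := by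
  obtain ⟨c₀, hc₀⟩ := hmod
  set Δ : Aˣ := b * a⁻¹ with hΔdef
  set δ : A := (Δ : A) with hδdef
  set δ' : A := ((Δ⁻¹ : Aˣ) : A) with hδ'def
  have hΔval : δ = (b : A) * ((a⁻¹ : Aˣ) : A) := rfl
  -- basic unit identities
  have hΔaΔ : Δ * a * Δ = a := by
    apply Units.ext
    have e : ((Δ * a * Δ : Aˣ) : A) = (b : A) * (((a⁻¹ : Aˣ) : A) * (a : A)) * ((b : A) * ((a⁻¹ : Aˣ) : A)) := by
      simp [hΔdef, Units.val_mul, mul_assoc]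
    rw [e, Units.inv_mul, mul_one, ← mul_assoc, ← hsq]
    exact Units.mul_inv_cancel_right _ _
  have eq1 : (a : Aˣ) * Δ = Δ⁻¹ * a := by
    have := congrArg (fun z => (Δ⁻¹ : Aˣ) * z) hΔaΔ
    simpa [mul_assoc] using this
  have hconj1 : (a⁻¹ : Aˣ) * Δ⁻¹ * a = Δ := by
    rw [mul_assoc, ← eq1, inv_mul_cancel_left]
  have hconj2 : (a⁻¹ : Aˣ) * Δ * a = Δ⁻¹ := by
    have := congrArg (fun z : Aˣ => z⁻¹) hconj1
    simpa [mul_inv_rev, mul_assoc] using this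
  have hδδ' : δ * δ' = 1 := by rw [hδdef, hδ'def, ← Units.val_mul, mul_inv_cancel]; rfl
  have hδ'δ : δ' * δ = 1 := by rw [hδdef, hδ'def, ← Units.val_mul, inv_mul_cancel]; rfl
  -- the commutative subalgebra
  set S : Subalgebra (PowerSeries ℂ) A := Algebra.adjoin (PowerSeries ℂ) {δ, δ'} with hSdef
  have hδS : δ ∈ S := Algebra.subset_adjoin (by simp)
  have hδ'S : δ' ∈ S := Algebra.subset_adjoin (by simp)
  have hpair : ∀ x ∈ ({δ, δ'} : Set A), ∀ y ∈ ({δ, δ'} : Set A), x * y = y * x := by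
    rintro x (rfl | rfl) y (rfl | rfl) <;> simp_all [hδδ', hδ'δ]
  letI : CommRing S := Algebra.adjoinCommRingOfComm (PowerSeries ℂ) hpair
  have hScomm : ∀ p q : A, p ∈ S → q ∈ S → p * q = q * p := by
    intro p q hp hq
    exact congrArg Subtype.val (mul_comm (⟨p, hp⟩ : S) (⟨q, hq⟩ : S))
  -- the half element
  set half : A := algebraMap (PowerSeries ℂ) A (PowerSeries.C (2⁻¹ : ℂ)) with hhalfdef
  have hhalfS : half ∈ S := Subalgebra.algebraMap_mem S _
  have hhc : ∀ y : A, half * y = y * half := fun y => Algebra.commutes _ _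
  have h2 : half + half = 1 := by
    rw [hhalfdef, ← map_add, ← map_add]
    have : (2⁻¹ : ℂ) + 2⁻¹ = 1 := by norm_num
    rw [this]; simp
  -- the iteration sequence
  have hmem : ∀ n, sseq δ half n ∈ S := by
    intro n
    induction n with
    | zero => exact one_mem S
    | succ n ih => exact add_mem ih (mul_mem (sub_mem hδS (mul_mem ih ih)) hhalfS)
  -- the key recursion identity, proved in the commutative ring S
  have hstep : ∀ n, δ - sseq δ half (n+1) * sseq δ half (n+1)
      = (δ - sseq δ half n * sseq δ half n) * (1 - sseq δ half n)
        - ((δ - sseq δ half n * sseq δ half n) * (δ - sseq δ half n * sseq δ half n))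
          * (half * half) := by
    intro n
    have h2S : (⟨half, hhalfS⟩ : S) + ⟨half, hhalfS⟩ = 1 := Subtype.ext h2
    have key : (⟨δ, hδS⟩ : S) - ⟨sseq δ half (n+1), hmem (n+1)⟩ * ⟨sseq δ half (n+1), hmem (n+1)⟩
        = ((⟨δ, hδS⟩ : S) - ⟨sseq δ half n, hmem n⟩ * ⟨sseq δ half n, hmem n⟩)
            * (1 - ⟨sseq δ half n, hmem n⟩)
          - (((⟨δ, hδS⟩ : S) - ⟨sseq δ half n, hmem n⟩ * ⟨sseq δ half n, hmem n⟩)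
              * ((⟨δ, hδS⟩ : S) - ⟨sseq δ half n, hmem n⟩ * ⟨sseq δ half n, hmem n⟩))
            * (⟨half, hhalfS⟩ * ⟨half, hhalfS⟩) := by
      have e : (⟨sseq δ half (n+1), hmem (n+1)⟩ : S)
          = ⟨sseq δ half n, hmem n⟩
            + ((⟨δ, hδS⟩ : S) - ⟨sseq δ half n, hmem n⟩ * ⟨sseq δ half n, hmem n⟩)
              * ⟨half, hhalfS⟩ := Subtype.ext rfl
      rw [e]
      exact comm_identity _ _ _ h2S
    exact congrArg Subtype.val key
  -- invariants
  have hδ1 : Jmem 1 (δ - 1) := by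
    have e : δ - 1 = ((b : A) - (a : A)) * ((a⁻¹ : Aˣ) : A) := by
      rw [sub_mul, hΔval, Units.mul_inv]
    refine ⟨c₀ * ((a⁻¹ : Aˣ) : A), ?_⟩
    rw [e, hc₀, pow_one, smul_mul_assoc]
  have hinv : ∀ n, Jmem (n+1) (δ - sseq δ half n * sseq δ half n)
      ∧ Jmem 1 (1 - sseq δ half n) := by
    intro n
    induction n with
    | zero =>
        constructor
        · simpa [sseq] using hδ1
        · simpa [sseq] using Jmem.zero 1
    | succ n ih =>
        have hε := ih.1
        have hg := ih.2
        constructor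
        · rw [hstep n]
          refine Jmem.sub ?_ ?_
          · exact hε.mul hg
          · exact ((hε.mul hε).mul_right _).mono (by omega)
        · have e : 1 - sseq δ half (n+1)
              = (1 - sseq δ half n) - (δ - sseq δ half n * sseq δ half n) * half := by
            show 1 - (sseq δ half n + (δ - sseq δ half n * sseq δ half n) * half) = _
            abel
          rw [e]
          exact hg.sub ((hε.mono (by omega)).mul_right _)
  -- Cauchy property and the limit L
  have hcauchy : ∀ m n, m ≤ n → Jmem m (sseq δ half n - sseq δ half m) := by
    intro m n h
    induction n, h using Nat.le_induction with
    | base => simpa using Jmem.zero m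
    | succ n hmn ih =>
        have e : sseq δ half (n+1) - sseq δ half m
            = (sseq δ half (n+1) - sseq δ half n) + (sseq δ half n - sseq δ half m) := by abel
        rw [e]
        refine Jmem.add (Jmem.mono (show m ≤ n+1 by omega) ?_) ih
        show Jmem (n+1) _
        have e2 : sseq δ half (n+1) - sseq δ half n
            = (δ - sseq δ half n * sseq δ half n) * half := by
          show sseq δ half n + (δ - sseq δ half n * sseq δ half n) * half - sseq δ half n = _
          abel
        rw [e2]
        exact ((hinv n).1).mul_right _
  obtain ⟨L, hL⟩ := limit (sseq δ half) hcauchy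
  -- L * L = δ
  have hL2 : L * L = δ := by
    refine sub_eq_zero.1 (haus fun n => ?_)
    have e : L * L - δ = L * (L - sseq δ half n) + (L - sseq δ half n) * sseq δ half n
        - (δ - sseq δ half n * sseq δ half n) := by noncomm_ring
    have hLn : Jmem n (L - sseq δ half n) := by
      rw [← neg_sub]; exact (hL n).neg
    rw [e]
    exact ((hLn.mul_left _).add (hLn.mul_right _)).sub (((hinv n).1).mono (by omega))
  -- the closure of S: elements approximable by S
  set Cb : A → Prop := fun x => ∀ n, ∃ p, p ∈ S ∧ Jmem n (x - p) with hCbdef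
  have hCbS : ∀ x ∈ S, Cb x := by
    intro x hx n
    exact ⟨x, hx, by simpa using Jmem.zero n⟩
  have hCbL : Cb L := by
    intro n
    exact ⟨sseq δ half n, hmem n, by rw [← neg_sub]; exact (hL n).neg⟩
  have hCbadd : ∀ x y, Cb x → Cb y → Cb (x + y) := by
    intro x y hx hy n
    obtain ⟨p, hp, hxp⟩ := hx n
    obtain ⟨q, hq, hyq⟩ := hy n
    exact ⟨p + q, add_mem hp hq, by
      have e : x + y - (p + q) = (x - p) + (y - q) := by abel
      rw [e]; exact hxp.add hyq⟩
  have hCbsub : ∀ x y, Cb x → Cb y → Cb (x - y) := by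
    intro x y hx hy n
    obtain ⟨p, hp, hxp⟩ := hx n
    obtain ⟨q, hq, hyq⟩ := hy n
    exact ⟨p - q, sub_mem hp hq, by
      have e : x - y - (p - q) = (x - p) - (y - q) := by abel
      rw [e]; exact hxp.sub hyq⟩
  have hCbmul : ∀ x y, Cb x → Cb y → Cb (x * y) := by
    intro x y hx hy n
    obtain ⟨p, hp, hxp⟩ := hx n
    obtain ⟨q, hq, hyq⟩ := hy n
    refine ⟨p * q, mul_mem hp hq, ?_⟩
    have e : x * y - p * q = x * (y - q) + (x - p) * q := by noncomm_ring
    rw [e]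
    exact (hyq.mul_left _).add (hxp.mul_right _)
  have hCbcomm : ∀ x y, Cb x → Cb y → x * y = y * x := by
    intro x y hx hy
    refine sub_eq_zero.1 (haus fun n => ?_)
    obtain ⟨p, hp, hxp⟩ := hx n
    obtain ⟨q, hq, hyq⟩ := hy n
    have hpq : p * q = q * p := hScomm p q hp hq
    have e : x * y - y * x
        = (x * (y - q) + (x - p) * q) - (y * (x - p) + (y - q) * p) + (p * q - q * p) := by
      noncomm_ring
    rw [e, hpq, sub_self, add_zero]
    exact ((hyq.mul_left _).add (hxp.mul_right _)).sub ((hxp.mul_left _).add (hyq.mul_right _))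
  have hCbpow : ∀ x, Cb x → ∀ k, Cb (x ^ k) := by
    intro x hx k
    induction k with
    | zero => simpa [pow_zero] using hCbS 1 (one_mem S)
    | succ k ih => rw [pow_succ]; exact hCbmul _ _ ih hx
  -- inverse of L via geometric series
  have hx₁J : Jmem 1 (1 - L) := by
    have e : 1 - L = (1 - sseq δ half 1) + (sseq δ half 1 - L) := by abel
    rw [e]
    exact ((hinv 1).2).add (hL 1)
  obtain ⟨M, hLM, hML, hMs⟩ := geom hx₁J
  have h1x : (1 : A) - (1 - L) = L := by abel
  rw [h1x] at hLM hML
  have hCbx₁ : Cb (1 - L) := hCbsub _ _ (hCbS 1 (one_mem S)) hCbL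
  have hCbM : Cb M := by
    intro n
    have hCbu : Cb (∑ k ∈ range n, (1 - L) ^ k) := by
      induction n with
      | zero => simpa using hCbS 0 (zero_mem S)
      | succ n ih => rw [sum_range_succ]; exact hCbadd _ _ ih (hCbpow _ hCbx₁ n)
    obtain ⟨p, hp, hup⟩ := hCbu n
    refine ⟨p, hp, ?_⟩
    have e : M - p = (M - ∑ k ∈ range n, (1 - L) ^ k) + ((∑ k ∈ range n, (1 - L) ^ k) - p) := by
      abel
    rw [e]
    exact (hMs n).add hup
  -- conjugation by a
  have hφmul : ∀ x y : A, (((a⁻¹ : Aˣ) : A) * (x * y) * (a : A))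
      = (((a⁻¹ : Aˣ) : A) * x * (a : A)) * (((a⁻¹ : Aˣ) : A) * y * (a : A)) := by
    intro x y
    simp [mul_assoc, Units.mul_inv_cancel_left]
  have hφS : ∀ x ∈ S, ((a⁻¹ : Aˣ) : A) * x * (a : A) ∈ S := by
    intro x hx
    refine Algebra.adjoin_induction ?_ ?_ ?_ ?_ hx
    · rintro y (rfl | rfl)
      · rw [show (((a⁻¹ : Aˣ) : A) * δ * (a : A)) = δ' from by
          rw [hδdef, ← Units.val_mul, ← Units.val_mul, hconj2]]
        exact hδ'S
      · rw [show (((a⁻¹ : Aˣ) : A) * δ' * (a : A)) = δ from by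
          rw [hδ'def, ← Units.val_mul, ← Units.val_mul, hconj1]]
        exact hδS
    · intro r
      rw [mul_assoc, Algebra.commutes r ((a : Aˣ) : A), ← mul_assoc,
        Units.inv_mul, one_mul]
      exact Subalgebra.algebraMap_mem S r
    · intro p q _ _ hp' hq'
      rw [mul_add, add_mul]
      exact add_mem hp' hq'
    · intro p q _ _ hp' hq'
      rw [hφmul]
      exact mul_mem hp' hq'
  have hφCb : ∀ x, Cb x → Cb (((a⁻¹ : Aˣ) : A) * x * (a : A)) := by
    intro x hx n
    obtain ⟨p, hp, hxp⟩ := hx n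
    refine ⟨((a⁻¹ : Aˣ) : A) * p * (a : A), hφS p hp, ?_⟩
    have e : ((a⁻¹ : Aˣ) : A) * x * (a : A) - ((a⁻¹ : Aˣ) : A) * p * (a : A)
        = ((a⁻¹ : Aˣ) : A) * (x - p) * (a : A) := by noncomm_ring
    rw [e]
    exact (hxp.mul_left _).mul_right _
  -- the conjugate square root
  set k : A := ((a⁻¹ : Aˣ) : A) * M * (a : A) with hkdef
  set gU : Aˣ := ⟨L, M, hLM, hML⟩ with hgUdef
  have hgU2 : gU * gU = Δ := Units.ext (by exact hL2)
  have hMM : M * M = δ' := by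
    have e : ((gU⁻¹ * gU⁻¹ : Aˣ) : A) = M * M := rfl
    rw [← e, ← mul_inv_rev, hgU2]
  have hk2 : k * k = δ := by
    rw [hkdef, ← hφmul, hMM, hδ'def, ← Units.val_mul, ← Units.val_mul, hconj1]
  have hCbk : Cb k := hφCb M hCbM
  have hkJ : Jmem 1 (k - 1) := by
    have hM1 : Jmem 1 (M - 1) := by simpa using hMs 1
    have e : k - 1 = ((a⁻¹ : Aˣ) : A) * (M - 1) * (a : A) := by
      rw [hkdef, mul_sub, mul_one, sub_mul, Units.inv_mul]
    rw [e]
    exact (hM1.mul_left _).mul_right _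
  -- uniqueness: L = k
  have hLk : L = k := by
    have hcm : L * k = k * L := hCbcomm L k hCbL hCbk
    have hprod : (L - k) * (L + k) = 0 := by
      have e : (L - k) * (L + k) = L * L - k * k + (L * k - k * L) := by noncomm_ring
      rw [e, hL2, hk2, hcm, sub_self, sub_self, add_zero]
    set z : A := ((1 - L) + (1 - k)) * half with hzdef
    have hzJ : Jmem 1 z := by
      refine Jmem.mul_right _ (Jmem.add hx₁J ?_)
      rw [← neg_sub]; exact hkJ.neg
    obtain ⟨Nz, hNz, -, -⟩ := geom hzJ
    have hzz : z + z = (1 - L) + (1 - k) := by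
      rw [hzdef, ← mul_add, h2, mul_one]
    have hsum : L + k = (1 - z) + (1 - z) := by
      rw [show (1 - z) + (1 - z) = (1 + 1) - (z + z) from by abel, hzz]
      abel
    have hz0 : (L - k) * ((1 - z) + (1 - z)) = 0 := by rw [← hsum]; exact hprod
    have hz1 : (L - k) * (1 - z) + (L - k) * (1 - z) = 0 := by rw [← mul_add]; exact hz0
    have hz2 : (L - k) + (L - k) = 0 := by
      have := congrArg (fun w => w * Nz) hz1
      simpa [add_mul, mul_assoc, hNz] using this
    have e : ((L - k) + (L - k)) * half = L - k := by
      rw [add_mul, ← mul_add, h2, mul_one]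
    have : L - k = 0 := by rw [← e, hz2, zero_mul]
    exact sub_eq_zero.1 this
  -- assembly
  have hgconj : gU = a⁻¹ * gU⁻¹ * a := by
    apply Units.ext
    show L = ((a⁻¹ * gU⁻¹ * a : Aˣ) : A)
    rw [Units.val_mul, Units.val_mul]
    exact hLk
  have e2 : a * gU = gU⁻¹ * a := by
    conv_lhs => rw [hgconj]
    group
  have e3 : gU⁻¹ * a⁻¹ = a⁻¹ * gU := by
    rw [← mul_inv_rev, e2, mul_inv_rev, inv_inv]
  have key : a * gU⁻¹ = gU * a := by
    calc a * gU⁻¹ = a * ((gU⁻¹ * a⁻¹) * a) := by group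
      _ = a * ((a⁻¹ * gU) * a) := by rw [e3]
      _ = gU * a := by group
  have hfinal : gU * a * gU⁻¹ = Δ * a := by
    rw [mul_assoc, key, ← mul_assoc, hgU2]
  refine ⟨gU, ?_, ?_, ?_⟩
  · have hJL1 : Jmem 1 (L - 1) := by rw [← neg_sub]; exact hx₁J.neg
    obtain ⟨c, hc⟩ := hJL1
    exact ⟨c, by rw [show (gU : A) = L from rfl, hc, pow_one]⟩
  · show L * L * (a : A) = (b : A)
    rw [hL2, hΔval]
    exact Units.inv_mul_cancel_right _ _
  · have := congrArg Units.val hfinal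
    rw [Units.val_mul, Units.val_mul, Units.val_mul] at this
    show (b : A) = (gU : A) * (a : A) * ((gU⁻¹ : Aˣ) : A)
    rw [this, ← hδdef, hΔval]
    exact (Units.inv_mul_cancel_right _ _).symm

end Main
end

section
/- Let A be a D-algebra and M a D-bimodule over A. Then the zeroth Dynkin cohomology vanishes: the Dynkin differential d_D^0 : CD^0(A;M) → CD^1(A;M) is injective, i.e. if m = {m_B} assigns to each connected B ⊆ D an element m_B ∈ M_B^B with m_B = Σ_{B' component of B\α} m_{B'} for every vertex α of B, then m = 0. -/
open scoped Classical

section Dynkin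

variable {V : Type*} [Fintype V] [DecidableEq V] {M : Type*} [AddCommGroup M]

/-- The set of connected components of (the induced subgraph on) `S`. -/
noncomputable def ccomps (Gr : SimpleGraph V) (S : Finset V) : Finset (Finset V) :=
  S.powerset.filter (IsCC Gr S)

/-- The Dynkin differential in degree 0:
`(d m)_{(B;α)} = m_B - ∑_{B' comp. of B∖α} m_{B'}`. -/
noncomputable def dynD0 (Gr : SimpleGraph V) (m : Finset V → M) :
    Finset V → (Fin 1 → V) → M :=
  fun B α => m B - ∑ C ∈ ccomps Gr (B.erase (α 0)), m C

end Dynkin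

/-- The zeroth Dynkin cohomology vanishes: the degree-zero Dynkin
differential is injective. If `m` assigns to each connected subdiagram `B` of `D` an
element `m_B ∈ M_B^B` with `d_D⁰ m = 0`, i.e. `m_B = ∑_{B' comp. of B∖α} m_{B'}` for
every vertex `α` of `B`, then `m = 0`. -/
theorem stmt14 {V : Type*} [Fintype V] [DecidableEq V]
    (Gr : SimpleGraph V) (hGr : Gr.Connected)
    {M : Type*} [AddCommGroup M]
    (MB : Finset V → AddSubgroup M)
    (m : Finset V → M)
    (hmem : ∀ B : Finset V, Conn Gr B → m B ∈ MB B)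
    (hker : ∀ (B : Finset V) (α : Fin 1 → V), Conn Gr B → α 0 ∈ B →
      dynD0 Gr m B α = 0) :
    ∀ B : Finset V, Conn Gr B → m B = 0 := by
  intro B
  induction B using Finset.strongInduction with
  | _ B ih =>
    intro hB
    obtain ⟨⟨a, ha⟩⟩ := hB.nonempty
    have ha' : a ∈ B := ha
    have hmB := hker B (fun _ => a) hB ha'
    simp only [dynD0, sub_eq_zero] at hmB
    rw [hmB]
    apply Finset.sum_eq_zero
    intro C hC
    simp only [ccomps, Finset.mem_filter, Finset.mem_powerset] at hC
    exact ih C (hC.1.trans_ssubset (Finset.erase_ssubset ha')) hC.2.2.1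
end

section
/- Let g be a complex semisimple (or more generally, a finite-dimensional complex) Lie algebra with a fixed invariant symmetric tensor Ω ∈ g ⊗ g, R = exp(ħΩ) ∈ U(g)^{⊗2}[[ħ]], and let Φ = 1 + ħ²φ + O(ħ³) ∈ 1 + ħ²(U(g)^{⊗3}[[ħ]])^g satisfy the pentagon equation and the two hexagon equations with respect to the cocommutative coproduct and R, together with Φ^{-1} = Φ^{321}. Then the total antisymmetrization of the ħ²-coefficient satisfies Alt_3 φ = (1/6)[Ω_{12}, Ω_{23}]. -/
open scoped TensorProduct

noncomputable section TensorSetup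

variable (A : Type*) [Ring A] [Algebra ℂ A]

/-- Insertion `A⊗A → A⊗A⊗A` into slots 1,2: `x ⊗ y ↦ x ⊗ y ⊗ 1`. -/
def i12 : A ⊗[ℂ] A →ₐ[ℂ] (A ⊗[ℂ] A) ⊗[ℂ] A :=
  Algebra.TensorProduct.includeLeft

/-- Insertion into slots 2,3: `x ⊗ y ↦ 1 ⊗ x ⊗ y`. -/
def i23 : A ⊗[ℂ] A →ₐ[ℂ] (A ⊗[ℂ] A) ⊗[ℂ] A :=
  (Algebra.TensorProduct.assoc ℂ ℂ ℂ A A A).symm.toAlgHom.comp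
    Algebra.TensorProduct.includeRight

/-- Insertion into slots 1,3: `x ⊗ y ↦ x ⊗ 1 ⊗ y`. -/
def i13 : A ⊗[ℂ] A →ₐ[ℂ] (A ⊗[ℂ] A) ⊗[ℂ] A :=
  Algebra.TensorProduct.map Algebra.TensorProduct.includeLeft (AlgHom.id ℂ A)

/-- The permutation of `A⊗A⊗A` exchanging the first two factors. -/
def s12 : (A ⊗[ℂ] A) ⊗[ℂ] A ≃ₐ[ℂ] (A ⊗[ℂ] A) ⊗[ℂ] A :=
  Algebra.TensorProduct.congr (Algebra.TensorProduct.comm ℂ A A) AlgEquiv.refl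

/-- The permutation of `A⊗A⊗A` exchanging the last two factors. -/
def s23 : (A ⊗[ℂ] A) ⊗[ℂ] A ≃ₐ[ℂ] (A ⊗[ℂ] A) ⊗[ℂ] A :=
  (Algebra.TensorProduct.assoc ℂ ℂ ℂ A A A).trans
    ((Algebra.TensorProduct.congr AlgEquiv.refl (Algebra.TensorProduct.comm ℂ A A)).trans
      (Algebra.TensorProduct.assoc ℂ ℂ ℂ A A A).symm)

/-- The permutation of `A⊗A⊗A` exchanging the outer factors. -/
def s13 : (A ⊗[ℂ] A) ⊗[ℂ] A ≃ₐ[ℂ] (A ⊗[ℂ] A) ⊗[ℂ] A :=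
  ((s12 A).trans (s23 A)).trans (s12 A)

/-- `x ↦ x₍₃₁₂₎`, i.e. `a ⊗ b ⊗ c ↦ b ⊗ c ⊗ a`. -/
def p312 : (A ⊗[ℂ] A) ⊗[ℂ] A ≃ₐ[ℂ] (A ⊗[ℂ] A) ⊗[ℂ] A :=
  (s12 A).trans (s23 A)

/-- `x ↦ x₍₂₃₁₎`, i.e. `a ⊗ b ⊗ c ↦ c ⊗ a ⊗ b`. -/
def p231 : (A ⊗[ℂ] A) ⊗[ℂ] A ≃ₐ[ℂ] (A ⊗[ℂ] A) ⊗[ℂ] A :=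
  (s23 A).trans (s12 A)

variable {A} (Δ : A →ₐ[ℂ] A ⊗[ℂ] A)

/-- `Δ ⊗ id : A⊗A → A⊗A⊗A`. -/
def dio : A ⊗[ℂ] A →ₐ[ℂ] (A ⊗[ℂ] A) ⊗[ℂ] A :=
  Algebra.TensorProduct.map Δ (AlgHom.id ℂ A)

/-- `id ⊗ Δ : A⊗A → A⊗A⊗A`. -/
def iod : A ⊗[ℂ] A →ₐ[ℂ] (A ⊗[ℂ] A) ⊗[ℂ] A :=
  (Algebra.TensorProduct.assoc ℂ ℂ ℂ A A A).symm.toAlgHom.comp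
    (Algebra.TensorProduct.map (AlgHom.id ℂ A) Δ)

/-- `Δ ⊗ id ⊗ id : A⊗A⊗A → A⊗A⊗A⊗A`. -/
def q1 : (A ⊗[ℂ] A) ⊗[ℂ] A →ₐ[ℂ] ((A ⊗[ℂ] A) ⊗[ℂ] A) ⊗[ℂ] A :=
  Algebra.TensorProduct.map (dio Δ) (AlgHom.id ℂ A)

/-- `id ⊗ Δ ⊗ id : A⊗A⊗A → A⊗A⊗A⊗A`. -/
def q2 : (A ⊗[ℂ] A) ⊗[ℂ] A →ₐ[ℂ] ((A ⊗[ℂ] A) ⊗[ℂ] A) ⊗[ℂ] A :=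
  Algebra.TensorProduct.map (iod Δ) (AlgHom.id ℂ A)

/-- `id ⊗ id ⊗ Δ : A⊗A⊗A → A⊗A⊗A⊗A`. -/
def q3 : (A ⊗[ℂ] A) ⊗[ℂ] A →ₐ[ℂ] ((A ⊗[ℂ] A) ⊗[ℂ] A) ⊗[ℂ] A :=
  (Algebra.TensorProduct.assoc ℂ ℂ ℂ (A ⊗[ℂ] A) A A).symm.toAlgHom.comp
    (Algebra.TensorProduct.map (AlgHom.id ℂ (A ⊗[ℂ] A)) Δ)

variable (A)

/-- `x ↦ 1 ⊗ x : A⊗A → A⊗A⊗A`. -/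
def e0 : A ⊗[ℂ] A →ₐ[ℂ] (A ⊗[ℂ] A) ⊗[ℂ] A :=
  Algebra.TensorProduct.map Algebra.TensorProduct.includeRight (AlgHom.id ℂ A)

/-- `x ↦ x ⊗ 1 : A⊗A → A⊗A⊗A`. -/
def e3 : A ⊗[ℂ] A →ₐ[ℂ] (A ⊗[ℂ] A) ⊗[ℂ] A :=
  Algebra.TensorProduct.includeLeft

/-- `x ↦ 1 ⊗ x : A⊗A⊗A → A⊗A⊗A⊗A`. -/
def e1 : (A ⊗[ℂ] A) ⊗[ℂ] A →ₐ[ℂ] ((A ⊗[ℂ] A) ⊗[ℂ] A) ⊗[ℂ] A :=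
  Algebra.TensorProduct.map (e0 A) (AlgHom.id ℂ A)

/-- `x ↦ x ⊗ 1 : A⊗A⊗A → A⊗A⊗A⊗A`. -/
def e4 : (A ⊗[ℂ] A) ⊗[ℂ] A →ₐ[ℂ] ((A ⊗[ℂ] A) ⊗[ℂ] A) ⊗[ℂ] A :=
  Algebra.TensorProduct.includeLeft

variable {A}

/-- The iterated coproduct `Δ⁽³⁾ = (Δ ⊗ id) ∘ Δ : A → A⊗A⊗A`. -/
def Δ3 : A →ₐ[ℂ] (A ⊗[ℂ] A) ⊗[ℂ] A := (dio Δ).comp Δ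

/-- The formal exponential `exp(ħ x)`: the power series in `ħ` whose `n`-th coefficient
is `xⁿ / n!`. -/
def hexp {R : Type*} [Ring R] [Algebra ℂ R] (x : R) : PowerSeries R :=
  PowerSeries.mk fun n => ((n.factorial : ℂ)⁻¹) • x ^ n

/-- Apply an algebra map to a formal power series coefficientwise. -/
def psMap {R S : Type*} [Ring R] [Ring S] [Algebra ℂ R] [Algebra ℂ S]
    (f : R →ₐ[ℂ] S) : PowerSeries R →+* PowerSeries S :=
  PowerSeries.map f.toRingHom

end TensorSetup



section PSHelpers

private lemma ps_c0_mul {R : Type*} [Ring R] (F G : PowerSeries R) :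
    PowerSeries.coeff 0 (F * G) = PowerSeries.coeff 0 F * PowerSeries.coeff 0 G := by
  simp [PowerSeries.coeff_mul]

private lemma ps_c1_mul {R : Type*} [Ring R] (F G : PowerSeries R) :
    PowerSeries.coeff 1 (F * G) = PowerSeries.coeff 0 F * PowerSeries.coeff 1 G
      + PowerSeries.coeff 1 F * PowerSeries.coeff 0 G := by
  rw [PowerSeries.coeff_mul, Finset.Nat.sum_antidiagonal_eq_sum_range_succ_mk]
  simp [Finset.sum_range_succ]

private lemma ps_c2_mul {R : Type*} [Ring R] (F G : PowerSeries R) :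
    PowerSeries.coeff 2 (F * G) = PowerSeries.coeff 0 F * PowerSeries.coeff 2 G
      + PowerSeries.coeff 1 F * PowerSeries.coeff 1 G
      + PowerSeries.coeff 2 F * PowerSeries.coeff 0 G := by
  rw [PowerSeries.coeff_mul, Finset.Nat.sum_antidiagonal_eq_sum_range_succ_mk]
  simp [Finset.sum_range_succ]

private lemma ps_coeff2_prod5 {R : Type*} [Ring R] (F1 F2 F3 F4 F5 : PowerSeries R)
    (h10 : PowerSeries.coeff 0 F1 = 1) (h11 : PowerSeries.coeff 1 F1 = 0)
    (h20 : PowerSeries.coeff 0 F2 = 1)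
    (h30 : PowerSeries.coeff 0 F3 = 1) (h31 : PowerSeries.coeff 1 F3 = 0)
    (h40 : PowerSeries.coeff 0 F4 = 1)
    (h50 : PowerSeries.coeff 0 F5 = 1) (h51 : PowerSeries.coeff 1 F5 = 0) :
    PowerSeries.coeff 2 (F1 * F2 * F3 * F4 * F5) =
      PowerSeries.coeff 2 F1 + PowerSeries.coeff 2 F2 + PowerSeries.coeff 2 F3
      + PowerSeries.coeff 2 F4 + PowerSeries.coeff 2 F5
      + PowerSeries.coeff 1 F2 * PowerSeries.coeff 1 F4 := by
  simp only [ps_c2_mul, ps_c1_mul, ps_c0_mul, h10, h11, h20, h30, h31, h40, h50, h51,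
    one_mul, mul_one, zero_mul, mul_zero, add_zero, zero_add]
  abel

private lemma ps_cmap {R S : Type*} [Ring R] [Ring S] [Algebra ℂ R] [Algebra ℂ S]
    (f : R →ₐ[ℂ] S) (F : PowerSeries R) (n : ℕ) :
    PowerSeries.coeff n (psMap f F) = f (PowerSeries.coeff n F) := by
  simp [psMap, PowerSeries.coeff_map]

private lemma hexp_c0 {R : Type*} [Ring R] [Algebra ℂ R] (x : R) :
    PowerSeries.coeff 0 (hexp x) = 1 := by
  simp [hexp]

private lemma hexp_c1 {R : Type*} [Ring R] [Algebra ℂ R] (x : R) :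
    PowerSeries.coeff 1 (hexp x) = x := by
  simp [hexp]

private lemma hexp_c2 {R : Type*} [Ring R] [Algebra ℂ R] (x : R) :
    PowerSeries.coeff 2 (hexp x) = (2 : ℂ)⁻¹ • (x * x) := by
  simp [hexp, Nat.factorial, pow_two]

private lemma comm_aux {B : Type*} [Ring B] (a b c : B)
    (h : (a + b + c) * c = c * (a + b + c)) : c * b - b * c = a * c - c * a := by
  rw [add_mul, add_mul, mul_add, mul_add] at h
  have h2 : a * c + b * c = c * a + c * b := add_right_cancel h
  rw [sub_eq_sub_iff_add_eq_add, add_comm (c * b) (c * a), ← h2, add_comm (a * c) (b * c)]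

private lemma comm_aux' {B : Type*} [Ring B] (a b c : B)
    (h : (a + b + c) * a = a * (a + b + c)) : b * a - a * b = a * c - c * a := by
  rw [add_mul, add_mul, mul_add, mul_add, add_assoc, add_assoc] at h
  have h2 : b * a + c * a = a * b + a * c := add_left_cancel h
  rw [sub_eq_sub_iff_add_eq_add, h2, add_comm]

end PSHelpers

set_option maxHeartbeats 3200000

/-- Let `Ω ∈ U(g)⊗U(g)` be the symmetric invariant tensor,
`R = exp(ħΩ)`, and `Φ = 1 + ħ²φ + O(ħ³)` an invariant solution of the pentagon and
hexagon equations with `Φ⁻¹ = Φ₍₃₂₁₎`. Then `Alt₃ φ = (1/6)[Ω₁₂, Ω₂₃]`, i.e.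
`∑_{σ ∈ S₃} sgn(σ) φ^σ = [Ω₁₂, Ω₂₃]`. (Here `A` plays the role of `U(g)` with its
cocommutative coproduct `Δ`.) -/
theorem stmt15 {A : Type*} [Ring A] [Algebra ℂ A]
    (Δ : A →ₐ[ℂ] A ⊗[ℂ] A)
    (hcoassoc : (dio Δ).comp Δ = (iod Δ).comp Δ)
    (hcocomm : ∀ a : A, (Algebra.TensorProduct.comm ℂ A A) (Δ a) = Δ a)
    (Ω : A ⊗[ℂ] A)
    (hΩsymm : (Algebra.TensorProduct.comm ℂ A A) Ω = Ω)
    (hΩinv : ∀ a : A, Commute Ω (Δ a))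
    (hΩ1 : dio Δ Ω = i13 A Ω + i23 A Ω)
    (hΩ2 : iod Δ Ω = i12 A Ω + i13 A Ω)
    (hΩc12 : Commute (i12 A Ω + i13 A Ω + i23 A Ω) (i12 A Ω))
    (hΩc13 : Commute (i12 A Ω + i13 A Ω + i23 A Ω) (i13 A Ω))
    (hΩc23 : Commute (i12 A Ω + i13 A Ω + i23 A Ω) (i23 A Ω))
    (Φ Φinv : PowerSeries ((A ⊗[ℂ] A) ⊗[ℂ] A))
    (hΦ0 : PowerSeries.coeff 0 Φ = 1)
    (hΦ1 : PowerSeries.coeff 1 Φ = 0)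
    (φ : (A ⊗[ℂ] A) ⊗[ℂ] A) (hφ : PowerSeries.coeff 2 Φ = φ)
    (hΦg : ∀ (a : A) (n : ℕ), Commute (PowerSeries.coeff n Φ) (Δ3 Δ a))
    (hΦinv : Φ * Φinv = 1 ∧ Φinv * Φ = 1)
    (h321 : Φinv = psMap (s13 A).toAlgHom Φ)
    (hpentagon : (psMap (q3 Δ) Φ : PowerSeries (((A ⊗[ℂ] A) ⊗[ℂ] A) ⊗[ℂ] A)) *
        psMap (q1 Δ) Φ =
      psMap (e1 A) Φ * psMap (q2 Δ) Φ * psMap (e4 A) Φ)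
    (hhex1 : psMap (dio Δ) (hexp Ω) =
      psMap (p312 A).toAlgHom Φ * psMap (i13 A) (hexp Ω) *
        psMap (s23 A).toAlgHom Φinv * psMap (i23 A) (hexp Ω) * Φ)
    (hhex2 : psMap (iod Δ) (hexp Ω) =
      psMap (p231 A).toAlgHom Φinv * psMap (i13 A) (hexp Ω) *
        psMap (s12 A).toAlgHom Φ * psMap (i12 A) (hexp Ω) * Φinv) :
    φ - (s12 A) φ - (s23 A) φ + (p231 A) φ + (p312 A) φ - (s13 A) φ =
      i12 A Ω * i23 A Ω - i23 A Ω * i12 A Ω := by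
  classical
  set a := i12 A Ω with ha
  set b := i13 A Ω with hb
  set c := i23 A Ω with hc
  have hone : ∀ n : ℕ, n ≠ 0 →
      PowerSeries.coeff (R := (A ⊗[ℂ] A) ⊗[ℂ] A) n 1 = 0 := by
    intro n hn; rw [PowerSeries.coeff_one, if_neg hn]
  have hmul := hΦinv.1
  have hI0 : PowerSeries.coeff 0 Φinv = 1 := by
    have h := congrArg (PowerSeries.coeff 0) hmul
    rwa [ps_c0_mul, hΦ0, one_mul, PowerSeries.coeff_zero_one] at h
  have hI1 : PowerSeries.coeff 1 Φinv = 0 := by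
    have h := congrArg (PowerSeries.coeff 1) hmul
    rwa [ps_c1_mul, hΦ0, hΦ1, one_mul, zero_mul, add_zero,
      hone 1 one_ne_zero] at h
  have hI2 : PowerSeries.coeff 2 Φinv = -φ := by
    have h := congrArg (PowerSeries.coeff 2) hmul
    rw [ps_c2_mul, hΦ0, hΦ1, hφ, hI0, one_mul, zero_mul, mul_one, add_zero,
      hone 2 two_ne_zero] at h
    exact eq_neg_of_add_eq_zero_left h
  have hs13 : s13 A φ = -φ := by
    have h := congrArg (PowerSeries.coeff 2) h321
    rw [hI2, ps_cmap, hφ, AlgEquiv.coe_toAlgHom] at h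
    exact h.symm
  -- hexagon 1 at order 2
  have H1 := congrArg (PowerSeries.coeff 2) hhex1
  rw [ps_cmap, hexp_c2, map_smul, map_mul, hΩ1,
    ps_coeff2_prod5 (psMap (p312 A).toAlgHom Φ) (psMap (i13 A) (hexp Ω))
      (psMap (s23 A).toAlgHom Φinv) (psMap (i23 A) (hexp Ω)) Φ
      (by rw [ps_cmap, hΦ0, map_one]) (by rw [ps_cmap, hΦ1, map_zero])
      (by rw [ps_cmap, hexp_c0, map_one])
      (by rw [ps_cmap, hI0, map_one]) (by rw [ps_cmap, hI1, map_zero])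
      (by rw [ps_cmap, hexp_c0, map_one])
      hΦ0 hΦ1] at H1
  simp only [ps_cmap, hexp_c1, hexp_c2, hφ, hI2, map_smul, map_mul, map_neg,
    AlgEquiv.coe_toAlgHom] at H1
  simp only [← ha, ← hb, ← hc] at H1
  -- hexagon 2 at order 2
  have H2 := congrArg (PowerSeries.coeff 2) hhex2
  rw [ps_cmap, hexp_c2, map_smul, map_mul, hΩ2,
    ps_coeff2_prod5 (psMap (p231 A).toAlgHom Φinv) (psMap (i13 A) (hexp Ω))
      (psMap (s12 A).toAlgHom Φ) (psMap (i12 A) (hexp Ω)) Φinv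
      (by rw [ps_cmap, hI0, map_one]) (by rw [ps_cmap, hI1, map_zero])
      (by rw [ps_cmap, hexp_c0, map_one])
      (by rw [ps_cmap, hΦ0, map_one]) (by rw [ps_cmap, hΦ1, map_zero])
      (by rw [ps_cmap, hexp_c0, map_one])
      hI0 hI1] at H2
  simp only [ps_cmap, hexp_c1, hexp_c2, hφ, hI2, map_smul, map_mul, map_neg,
    AlgEquiv.coe_toAlgHom] at H2
  simp only [← ha, ← hb, ← hc] at H2
  have E1 : φ + p312 A φ - s23 A φ = (2 : ℂ)⁻¹ • (c * b - b * c) := by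
    have hx : (b + c) * (b + c) = b * b + (b * c + c * b) + c * c := by noncomm_ring
    rw [hx] at H1
    have key : (φ + p312 A φ - s23 A φ) - (2 : ℂ)⁻¹ • (c * b - b * c)
        = (p312 A φ + (2 : ℂ)⁻¹ • (b * b) + -(s23 A φ) + (2 : ℂ)⁻¹ • (c * c) + φ + b * c)
          - (2 : ℂ)⁻¹ • (b * b + (b * c + c * b) + c * c) := by module
    rw [← H1, sub_self] at key
    exact sub_eq_zero.mp key
  have E2 : φ + p231 A φ - s12 A φ = (2 : ℂ)⁻¹ • (b * a - a * b) := by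
    have hx : (a + b) * (a + b) = a * a + (a * b + b * a) + b * b := by noncomm_ring
    rw [hx] at H2
    have key : (φ + p231 A φ - s12 A φ) - (2 : ℂ)⁻¹ • (b * a - a * b)
        = (2 : ℂ)⁻¹ • (a * a + (a * b + b * a) + b * b)
          - (-(p231 A φ) + (2 : ℂ)⁻¹ • (b * b) + s12 A φ + (2 : ℂ)⁻¹ • (a * a) + -φ + b * a) := by
      module
    rw [H2, sub_self] at key
    exact sub_eq_zero.mp key
  have C1 : b * a - a * b = a * c - c * a := comm_aux' a b c hΩc12.eq
  have C3 : c * b - b * c = a * c - c * a := comm_aux a b c hΩc23.eq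
  rw [hs13, sub_neg_eq_add]
  have rearr : φ - s12 A φ - s23 A φ + p231 A φ + p312 A φ + φ
      = (φ + p312 A φ - s23 A φ) + (φ + p231 A φ - s12 A φ) := by abel
  rw [rearr, E1, E2, C3, C1, ← add_smul]
  norm_num
end
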